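/- arXiv:1802.07112 — 2 statements merged into one kernel-verified Lean document; each statement's English description precedes it below -/
import Mathlib

section
/- The number of leaves of a uniform random rooted map with n edges converges in distribution to a Poisson law of parameter 1: for every integer k ≥ 0, lim_{n→∞} ℓ_{n,k}/m(n) = e^{−1}/k!. -/
open Polynomial Filter Finset

namespace LeavesAux

/-- middle convolution of `m` -/
def Sm (m : ℕ → ℕ) (n : ℕ) : ℕ := ∑ k ∈ Finset.Ioo 0 n, m k * m (n - k)

lemma Ioo01 : Finset.Ioo 0 1 = (∅ : Finset ℕ) := by ext x; simp; omega

lemma Sm_zero (m : ℕ → ℕ) : Sm m 0 = 0 := by simp [Sm]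
lemma Sm_one (m : ℕ → ℕ) : Sm m 1 = 0 := by simp [Sm, Ioo01]

lemma range_split {n : ℕ} (hn : 1 ≤ n) :
    Finset.range (n+1) = insert 0 (insert n (Finset.Ioo 0 n)) := by
  ext x
  simp only [Finset.mem_range, Finset.mem_insert, Finset.mem_Ioo]
  omega

section mfacts
variable {m : ℕ → ℕ} (hm0 : m 0 = 1)
  (hm : ∀ n : ℕ, m (n + 1) =
      (∑ k ∈ Finset.range (n + 1), m k * m (n - k)) + (2 * (n + 1) - 1) * m n)

include hm0 hm

lemma m_one : m 1 = 2 := by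
  have h := hm 0
  simp [hm0] at h
  omega

lemma m_pos : ∀ n, 0 < m n := by
  intro n
  induction n with
  | zero => simp [hm0]
  | succ n ih =>
    have h := hm n
    have h2 : 1 ≤ 2 * (n+1) - 1 := by omega
    have := Nat.mul_le_mul h2 ih
    omega

lemma m_rec {n : ℕ} (hn : 1 ≤ n) : m (n+1) = (2*n+3) * m n + Sm m n := by
  have h0 : (0:ℕ) ∉ insert n (Finset.Ioo 0 n) := by
    simp only [Finset.mem_insert, Finset.mem_Ioo]; omega
  have h1 : n ∉ Finset.Ioo 0 n := by simp
  rw [hm n, range_split hn, Finset.sum_insert h0, Finset.sum_insert h1]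
  simp only [hm0, Nat.sub_zero, Nat.sub_self, one_mul, mul_one]
  have e : 2*(n+1)-1 = 2*n+1 := by omega
  rw [e]
  unfold Sm
  ring

lemma m_lower {n : ℕ} (hn : 1 ≤ n) : (2*n+3) * m n ≤ m (n+1) := by
  rw [m_rec hm0 hm hn]; omega

lemma m_lower' {n : ℕ} (hn : 2 ≤ n) : (2*n+1) * m (n-1) ≤ m n := by
  have h1 : 1 ≤ n - 1 := by omega
  have := m_lower hm0 hm h1
  have e : n-1+1 = n := by omega
  have e2 : 2*(n-1)+3 = 2*n+1 := by omega
  rwa [e, e2] at this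

/-- chain lemma: terms of the convolution increase toward the edges -/
lemma chain {n : ℕ} (hU : ∀ i, 2*i + 2 ≤ n → m (i+1) ≤ (2*i+4) * m i) :
    ∀ k j, j ≤ k → 1 ≤ j → 2*k ≤ n → m k * m (n-k) ≤ m j * m (n-j) := by
  intro k
  induction k with
  | zero => intro j hj hj1 _; exact absurd (hj1.trans hj) (by omega)
  | succ k ih =>
    intro j hj hj1 h2k
    rcases Nat.eq_or_lt_of_le hj with h | h
    · rw [h]
    · have hjk : j ≤ k := by omega
      have h2k' : 2*k ≤ n := by omega
      have step : m (k+1) * m (n-(k+1)) ≤ m k * m (n-k) := by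
        have hU1 : m (k+1) ≤ (2*k+4) * m k := hU k (by omega)
        have hl : (2*(n-k-1)+3) * m (n-k-1) ≤ m (n-k) := by
          have h1 : 1 ≤ n-k-1 := by omega
          have := m_lower hm0 hm h1
          have he : n-k-1+1 = n-k := by omega
          rwa [he] at this
        have e : n - (k+1) = n-k-1 := by omega
        rw [e]
        calc m (k+1) * m (n-k-1) ≤ ((2*k+4) * m k) * m (n-k-1) :=
              Nat.mul_le_mul_right _ hU1
          _ ≤ ((2*(n-k-1)+3) * m k) * m (n-k-1) := by
              apply Nat.mul_le_mul_right
              apply Nat.mul_le_mul_right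
              omega
          _ = ((2*(n-k-1)+3) * m (n-k-1)) * m k := by ring
          _ ≤ m (n-k) * m k := Nat.mul_le_mul_right _ hl
          _ = m k * m (n-k) := Nat.mul_comm _ _
      exact step.trans (ih j hjk hj1 h2k')

lemma conv_term_le {n k j : ℕ} (hU : ∀ i, 2*i + 2 ≤ n → m (i+1) ≤ (2*i+4) * m i)
    (hj1 : 1 ≤ j) (h2j : 2*j ≤ n) (hk1 : j ≤ k) (hk2 : k ≤ n - j) :
    m k * m (n-k) ≤ m j * m (n-j) := by
  rcases le_or_gt (2*k) n with h | h
  · exact chain hm0 hm hU k j hk1 hj1 h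
  · have hkn : k ≤ n := by omega
    have h2 : 2*(n-k) ≤ n := by omega
    have hsym : n - (n-k) = k := by omega
    have hj' : j ≤ n - k := by omega
    have := chain hm0 hm hU (n-k) j hj' hj1 h2
    rw [hsym, mul_comm] at this
    exact this

lemma Sm_le_m : ∀ n, Sm m n ≤ m n := by
  intro n
  induction n using Nat.strong_induction_on with
  | _ n ih =>
    rcases le_or_gt n 1 with h | h
    · interval_cases n
      · rw [Sm_zero]; omega
      · rw [Sm_one]; omega
    · have hU : ∀ i, 2*i + 2 ≤ n → m (i+1) ≤ (2*i+4) * m i := by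
        intro i hi
        rcases Nat.eq_zero_or_pos i with rfl | hi1
        · rw [m_one hm0 hm, hm0]; omega
        · rw [m_rec hm0 hm hi1]
          have h1 := ih i (by omega)
          have e : (2*i+4) * m i = (2*i+3) * m i + m i := by ring
          rw [e]
          omega
      have hterm : ∀ k ∈ Finset.Ioo 0 n, m k * m (n-k) ≤ m 1 * m (n-1) := by
        intro k hk
        simp only [Finset.mem_Ioo] at hk
        exact conv_term_le hm0 hm hU le_rfl (by omega) (by omega) (by omega)
      have hcard : (Finset.Ioo 0 n).card = n - 1 := by rw [Nat.card_Ioo]; omega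
      have hsum : Sm m n ≤ (n-1) * (m 1 * m (n-1)) := by
        have := Finset.sum_le_card_nsmul _ _ _ hterm
        rw [hcard, smul_eq_mul] at this
        exact this
      have hlow : (2*(n-1)+3) * m (n-1) ≤ m n := by
        have h1 : 1 ≤ n - 1 := by omega
        have := m_lower hm0 hm h1
        have he : n-1+1 = n := by omega
        rwa [he] at this
      rw [m_one hm0 hm] at hsum
      have e : (n-1) * (2 * m (n-1)) = (2*(n-1)) * m (n-1) := by ring
      rw [e] at hsum
      have e2 : (2*(n-1)) * m (n-1) ≤ (2*(n-1)+3) * m (n-1) :=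
        Nat.mul_le_mul_right _ (by omega)
      omega

lemma m_upper : ∀ i, m (i+1) ≤ (2*i+4) * m i := by
  intro i
  rcases Nat.eq_zero_or_pos i with rfl | hi1
  · rw [m_one hm0 hm, hm0]; omega
  · rw [m_rec hm0 hm hi1]
    have h1 := Sm_le_m hm0 hm i
    have e : (2*i+4) * m i = (2*i+3) * m i + m i := by ring
    omega

lemma m_two : m 2 = 10 := by
  have h := m_rec hm0 hm (n := 1) le_rfl
  rw [Sm_one, m_one hm0 hm] at h
  norm_num at h
  omega

/-- The key quantitative bound: `4 * Sm n ≤ 3 * m n`. -/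
lemma Sm_le_34 : ∀ n, 4 * Sm m n ≤ 3 * m n := by
  intro n
  rcases le_or_gt n 2 with h | h
  · interval_cases n
    · rw [Sm_zero]; omega
    · rw [Sm_one]; omega
    · have hIoo : Finset.Ioo 0 2 = ({1} : Finset ℕ) := by ext x; simp; omega
      have hS : Sm m 2 = m 1 * m 1 := by unfold Sm; rw [hIoo]; simp
      rw [hS, m_one hm0 hm, m_two hm0 hm]
      norm_num
  · -- n ≥ 3
    obtain ⟨p, rfl⟩ : ∃ p, n = p + 3 := ⟨n - 3, by omega⟩
    have hU' : ∀ i, 2*i + 2 ≤ p+3 → m (i+1) ≤ (2*i+4) * m i := fun i _ => m_upper hm0 hm i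
    have e1 : p+3-1 = p+2 := by omega
    have e2 : p+3-2 = p+1 := by omega
    have hsplit : Finset.Ioo 0 (p+3) = insert 1 (insert (p+2) (Finset.Ioo 1 (p+2))) := by
      ext x
      simp only [Finset.mem_Ioo, Finset.mem_insert]
      omega
    have hmid : ∀ k ∈ Finset.Ioo 1 (p+2), m k * m (p+3-k) ≤ m 2 * m (p+1) := by
      intro k hk
      simp only [Finset.mem_Ioo] at hk
      have := conv_term_le hm0 hm hU' (j := 2) (k := k) (by omega) (by omega) (by omega) (by omega)
      rwa [e2] at this
    have hS : Sm m (p+3) ≤ 4 * m (p+2) + p * (10 * m (p+1)) := by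
      unfold Sm
      rw [hsplit, Finset.sum_insert (by simp only [Finset.mem_insert, Finset.mem_Ioo]; omega),
        Finset.sum_insert (by simp only [Finset.mem_Ioo]; omega)]
      have t1 : m 1 * m (p+3-1) = 2 * m (p+2) := by rw [e1, m_one hm0 hm]
      have t2 : m (p+2) * m (p+3-(p+2)) = 2 * m (p+2) := by
        have : p+3-(p+2) = 1 := by omega
        rw [this, m_one hm0 hm]; ring
      rw [t1, t2]
      have hmids : ∑ k ∈ Finset.Ioo 1 (p+2), m k * m (p+3-k) ≤ p * (10 * m (p+1)) := by
        have := Finset.sum_le_card_nsmul _ _ _ hmid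
        rw [Nat.card_Ioo, smul_eq_mul] at this
        have ec : p+2-1-1 = p := by omega
        rw [ec, m_two hm0 hm] at this
        exact this
      omega
    have hlow1 : (2*p+5) * m (p+1) ≤ m (p+2) := by
      have := m_lower hm0 hm (n := p+1) (by omega)
      have e : 2*(p+1)+3 = 2*p+5 := by omega
      rwa [e] at this
    have hlow2 : (2*p+7) * m (p+2) ≤ m (p+3) := by
      have := m_lower hm0 hm (n := p+2) (by omega)
      have e : 2*(p+2)+3 = 2*p+7 := by omega
      rwa [e] at this
    -- 4*Sm ≤ 16 m(p+2) + 40 p m(p+1); and 40p·m(p+1) ≤ (6p+5)(2p+5) m(p+1) ≤ (6p+5) m(p+2)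
    -- so 4 Sm ≤ (6p+21) m(p+2) = 3(2p+7) m(p+2) ≤ 3 m(p+3)
    have k1 : 40 * p * m (p+1) ≤ (6*p+5) * ((2*p+5) * m (p+1)) := by
      have : 40 * p ≤ (6*p+5) * (2*p+5) := by nlinarith
      calc 40 * p * m (p+1) ≤ ((6*p+5) * (2*p+5)) * m (p+1) := Nat.mul_le_mul_right _ this
        _ = (6*p+5) * ((2*p+5) * m (p+1)) := by ring
    have k2 : 40 * p * m (p+1) ≤ (6*p+5) * m (p+2) := k1.trans (Nat.mul_le_mul_left _ hlow1)
    have k3 : 3 * ((2*p+7) * m (p+2)) ≤ 3 * m (p+3) := Nat.mul_le_mul_left _ hlow2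
    have e4 : 16 * m (p+2) + (6*p+5) * m (p+2) = 3 * ((2*p+7) * m (p+2)) := by ring
    have e5 : 4 * (4 * m (p+2) + p * (10 * m (p+1))) = 16 * m (p+2) + 40 * p * m (p+1) := by ring
    omega

lemma Sm_le_9 {n : ℕ} (hn : 2 ≤ n) : Sm m n ≤ 9 * m (n-1) := by
  rcases le_or_gt n 2 with h | h
  · have e : n = 2 := by omega
    subst e
    have hIoo : Finset.Ioo 0 2 = ({1} : Finset ℕ) := by ext x; simp; omega
    have hS : Sm m 2 = m 1 * m 1 := by unfold Sm; rw [hIoo]; simp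
    rw [hS, m_one hm0 hm]
    have := m_pos hm0 hm 1
    omega
  · obtain ⟨p, rfl⟩ : ∃ p, n = p + 3 := ⟨n - 3, by omega⟩
    have hU' : ∀ i, 2*i + 2 ≤ p+3 → m (i+1) ≤ (2*i+4) * m i := fun i _ => m_upper hm0 hm i
    have e1 : p+3-1 = p+2 := by omega
    have e2 : p+3-2 = p+1 := by omega
    have hsplit : Finset.Ioo 0 (p+3) = insert 1 (insert (p+2) (Finset.Ioo 1 (p+2))) := by
      ext x
      simp only [Finset.mem_Ioo, Finset.mem_insert]
      omega
    have hmid : ∀ k ∈ Finset.Ioo 1 (p+2), m k * m (p+3-k) ≤ m 2 * m (p+1) := by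
      intro k hk
      simp only [Finset.mem_Ioo] at hk
      have := conv_term_le hm0 hm hU' (j := 2) (k := k) (by omega) (by omega) (by omega) (by omega)
      rwa [e2] at this
    have hS : Sm m (p+3) ≤ 4 * m (p+2) + p * (10 * m (p+1)) := by
      unfold Sm
      rw [hsplit, Finset.sum_insert (by simp only [Finset.mem_insert, Finset.mem_Ioo]; omega),
        Finset.sum_insert (by simp only [Finset.mem_Ioo]; omega)]
      have t1 : m 1 * m (p+3-1) = 2 * m (p+2) := by rw [e1, m_one hm0 hm]
      have t2 : m (p+2) * m (p+3-(p+2)) = 2 * m (p+2) := by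
        have : p+3-(p+2) = 1 := by omega
        rw [this, m_one hm0 hm]; ring
      rw [t1, t2]
      have hmids : ∑ k ∈ Finset.Ioo 1 (p+2), m k * m (p+3-k) ≤ p * (10 * m (p+1)) := by
        have := Finset.sum_le_card_nsmul _ _ _ hmid
        rw [Nat.card_Ioo, smul_eq_mul] at this
        have ec : p+2-1-1 = p := by omega
        rw [ec, m_two hm0 hm] at this
        exact this
      omega
    have hlow1 : (2*p+5) * m (p+1) ≤ m (p+2) := by
      have := m_lower hm0 hm (n := p+1) (by omega)
      have e : 2*(p+1)+3 = 2*p+5 := by omega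
      rwa [e] at this
    -- 10 p m(p+1) ≤ 5 m(p+2) since 2p m(p+1) ≤ (2p+5) m(p+1) ≤ m(p+2)
    have k1 : p * (10 * m (p+1)) ≤ 5 * m (p+2) := by
      have h1 : 2 * p * m (p+1) ≤ (2*p+5) * m (p+1) := Nat.mul_le_mul_right _ (by omega)
      have h2 : 2 * p * m (p+1) ≤ m (p+2) := h1.trans hlow1
      have e : p * (10 * m (p+1)) = 5 * (2 * p * m (p+1)) := by ring
      rw [e]
      exact Nat.mul_le_mul_left _ h2
    have efin : p+3-1 = p+2 := by omega
    rw [efin]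
    omega


end mfacts

lemma alt_sum (M t : ℕ) (hM : 1 ≤ M) :
    ∑ j ∈ Finset.range (t+1), (-1:ℝ)^j * (M.choose j : ℝ) = (-1)^t * ((M-1).choose t : ℝ) := by
  obtain ⟨M', rfl⟩ : ∃ M', M = M'+1 := ⟨M-1, by omega⟩
  simp only [Nat.add_sub_cancel]
  induction t with
  | zero => simp
  | succ t ih =>
    rw [Finset.sum_range_succ, ih]
    rw [Nat.choose_succ_succ M' t]
    push_cast
    rw [pow_succ]
    ring

lemma choose_id (ν k j : ℕ) (h : k ≤ ν) :
    ((k+j).choose k) * (ν.choose (k+j)) = (ν.choose k) * ((ν-k).choose j) := by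
  rcases le_or_gt (k+j) ν with hle | hlt
  · have h2 := Nat.choose_mul (n := ν) (Nat.le_add_right k j)
    rw [Nat.add_sub_cancel_left] at h2
    rw [mul_comm]
    exact h2
  · rw [Nat.choose_eq_zero_of_lt hlt, Nat.choose_eq_zero_of_lt (by omega : ν - k < j)]
    simp

lemma prod_decay (a : ℕ → ℝ) (N : ℕ) (ha : ∀ n, N ≤ n → 0 ≤ a n ∧ a n ≤ 1)
    (hlow : ∀ n, N ≤ n → 1/(4*((n:ℝ)+1)) ≤ a n) :
    Tendsto (fun n => ∏ k ∈ Finset.Ico N n, (1 - a k)) atTop (nhds 0) := by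
  have hP0 : ∀ n, 0 ≤ ∏ k ∈ Finset.Ico N n, (1 - a k) := by
    intro n
    apply Finset.prod_nonneg
    intro k hk
    have := ha k (Finset.mem_Ico.mp hk).1
    linarith [this.2]
  have hPle : ∀ n, (∏ k ∈ Finset.Ico N n, (1 - a k)) ≤ Real.exp (-(∑ k ∈ Finset.Ico N n, a k)) := by
    intro n
    have : Real.exp (-(∑ k ∈ Finset.Ico N n, a k)) = ∏ k ∈ Finset.Ico N n, Real.exp (-(a k)) := by
      rw [← Real.exp_sum, ← Finset.sum_neg_distrib]
    rw [this]
    apply Finset.prod_le_prod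
    · intro k hk
      have := ha k (Finset.mem_Ico.mp hk).1
      linarith [this.2]
    · intro k hk
      have h := Real.add_one_le_exp (-(a k))
      linarith
  -- the sums tend to infinity
  have hsum : Tendsto (fun n => ∑ k ∈ Finset.Ico N n, a k) atTop atTop := by
    have hhalf : Tendsto (fun n => ∑ k ∈ Finset.Ico N n, 1/(4*((k:ℝ)+1))) atTop atTop := by
      have hbase : Tendsto (fun n => ∑ i ∈ Finset.range n, (1:ℝ)/(i+1)) atTop atTop :=
        Real.tendsto_sum_range_one_div_nat_succ_atTop
      have heq : ∀ n, N ≤ n → ∑ k ∈ Finset.Ico N n, 1/(4*((k:ℝ)+1))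
          = (1/4) * ((∑ i ∈ Finset.range n, (1:ℝ)/(i+1)) - ∑ i ∈ Finset.range N, (1:ℝ)/(i+1)) := by
        intro n hn
        rw [← Finset.sum_Ico_eq_sub _ hn, Finset.mul_sum]
        apply Finset.sum_congr rfl
        intro k _
        have hk : (0:ℝ) < (k:ℝ)+1 := by positivity
        field_simp
      have h2 : Tendsto (fun n => (1/4 : ℝ) * ((∑ i ∈ Finset.range n, (1:ℝ)/(i+1))
          - ∑ i ∈ Finset.range N, (1:ℝ)/(i+1))) atTop atTop := by
        apply Tendsto.const_mul_atTop (by norm_num : (0:ℝ) < 1/4)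
        apply Filter.tendsto_atTop_add_const_right
        exact hbase
      apply Tendsto.congr' _ h2
      filter_upwards [eventually_ge_atTop N] with n hn
      exact (heq n hn).symm
    apply tendsto_atTop_mono' _ _ hhalf
    filter_upwards [eventually_ge_atTop N] with n hn
    apply Finset.sum_le_sum
    intro k hk
    exact hlow k (Finset.mem_Ico.mp hk).1
  have hexp : Tendsto (fun n => Real.exp (-(∑ k ∈ Finset.Ico N n, a k))) atTop (nhds 0) :=
    Real.tendsto_exp_neg_atTop_nhds_zero.comp hsum
  exact tendsto_of_tendsto_of_tendsto_of_le_of_le tendsto_const_nhds hexp hP0 hPle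

lemma decay_aux (a : ℕ → ℝ) (e : ℕ → ℝ) (N : ℕ)
    (ha : ∀ n, N ≤ n → 0 ≤ a n ∧ a n ≤ 1)
    (he : ∀ n, N ≤ n → e (n+1) ≤ (1 - a n) * e n) :
    ∀ n, N ≤ n → e n ≤ max (e N) 0 * ∏ k ∈ Finset.Ico N n, (1 - a k) := by
  intro n hn
  induction n, hn using Nat.le_induction with
  | base => simp [le_max_left]
  | succ n hn ih =>
    have h1 : 0 ≤ 1 - a n := by linarith [(ha n hn).2]
    have hP0 : 0 ≤ ∏ k ∈ Finset.Ico N n, (1 - a k) := by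
      apply Finset.prod_nonneg
      intro k hk
      linarith [(ha k (Finset.mem_Ico.mp hk).1).2]
    calc e (n+1) ≤ (1 - a n) * e n := he n hn
      _ ≤ (1 - a n) * (max (e N) 0 * ∏ k ∈ Finset.Ico N n, (1 - a k)) :=
          mul_le_mul_of_nonneg_left ih h1
      _ = max (e N) 0 * ((∏ k ∈ Finset.Ico N n, (1 - a k)) * (1 - a n)) := by ring
      _ = max (e N) 0 * ∏ k ∈ Finset.Ico N (n+1), (1 - a k) := by
          rw [Finset.prod_Ico_succ_top hn]

/-- The stochastic-approximation-type convergence lemma. -/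
lemma tendsto_of_contraction (x a c : ℕ → ℝ) (L : ℝ) (N₀ : ℕ)
    (hx : ∀ n, N₀ ≤ n → x (n+1) = (1 - a n) * x n + c n)
    (ha : ∀ n, N₀ ≤ n → 0 ≤ a n ∧ a n ≤ 1)
    (hlow : ∀ n, N₀ ≤ n → 1/(4*((n:ℝ)+1)) ≤ a n)
    (hc : ∀ ε : ℝ, 0 < ε → ∀ᶠ n in atTop, |c n - L * a n| ≤ ε * a n) :
    Tendsto x atTop (nhds L) := by
  rw [Metric.tendsto_atTop]
  intro ε hε
  obtain ⟨N₁, hN₁⟩ := (hc (ε/2) (by linarith)).exists_forall_of_atTop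
  set N := max N₁ N₀ with hN
  have hNN₀ : N₀ ≤ N := le_max_right _ _
  have haN : ∀ n, N ≤ n → 0 ≤ a n ∧ a n ≤ 1 := fun n hn => ha n (hNN₀.trans hn)
  have hdecay : Tendsto (fun n => ∏ k ∈ Finset.Ico N n, (1 - a k)) atTop (nhds 0) :=
    prod_decay a N haN (fun n hn => hlow n (hNN₀.trans hn))
  -- upper estimate
  have hup : ∀ n, N ≤ n → x n - (L + ε/2) ≤ max (x N - (L + ε/2)) 0 * ∏ k ∈ Finset.Ico N n, (1 - a k) := by
    apply decay_aux a (fun n => x n - (L + ε/2)) N haN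
    intro n hn
    have hxr := hx n (hNN₀.trans hn)
    have hcb := hN₁ n (le_trans (le_max_left _ _) hn)
    have h1 : c n ≤ L * a n + (ε/2) * a n := by
      have := abs_le.mp hcb
      linarith [this.2]
    rw [hxr]
    ring_nf
    nlinarith [h1]
  have hlo : ∀ n, N ≤ n → (L - ε/2) - x n ≤ max ((L - ε/2) - x N) 0 * ∏ k ∈ Finset.Ico N n, (1 - a k) := by
    apply decay_aux a (fun n => (L - ε/2) - x n) N haN
    intro n hn
    have hxr := hx n (hNN₀.trans hn)
    have hcb := hN₁ n (le_trans (le_max_left _ _) hn)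
    have h1 : L * a n - (ε/2) * a n ≤ c n := by
      have := abs_le.mp hcb
      linarith [this.1]
    rw [hxr]
    ring_nf
    nlinarith [h1]
  -- products eventually small
  have hMup : Tendsto (fun n => max (x N - (L + ε/2)) 0 * ∏ k ∈ Finset.Ico N n, (1 - a k)) atTop (nhds 0) := by
    have := hdecay.const_mul (max (x N - (L + ε/2)) 0)
    simpa using this
  have hMlo : Tendsto (fun n => max ((L - ε/2) - x N) 0 * ∏ k ∈ Finset.Ico N n, (1 - a k)) atTop (nhds 0) := by
    have := hdecay.const_mul (max ((L - ε/2) - x N) 0)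
    simpa using this
  have hev : ∀ᶠ n in atTop,
      max (x N - (L + ε/2)) 0 * (∏ k ∈ Finset.Ico N n, (1 - a k)) < ε/4
      ∧ max ((L - ε/2) - x N) 0 * (∏ k ∈ Finset.Ico N n, (1 - a k)) < ε/4 := by
    have h1 := hMup.eventually (eventually_lt_nhds (by linarith : (0:ℝ) < ε/4))
    have h2 := hMlo.eventually (eventually_lt_nhds (by linarith : (0:ℝ) < ε/4))
    filter_upwards [h1, h2] with n p1 p2
    exact ⟨p1, p2⟩
  obtain ⟨N₂, hN₂⟩ := (hev.and (eventually_ge_atTop N)).exists_forall_of_atTop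
  refine ⟨N₂, fun n hn => ?_⟩
  obtain ⟨⟨p1, p2⟩, hnN⟩ := hN₂ n hn
  have u1 := hup n hnN
  have u2 := hlo n hnN
  rw [Real.dist_eq, abs_lt]
  constructor
  · nlinarith
  · nlinarith



section lfacts
variable {l : ℕ → Polynomial ℝ} (hl0 : l 0 = X)
  (hl : ∀ n : ℕ, l (n + 1) =
      (C 2 - X) * l n + C (2 * (n : ℝ)) * l n +
        (∑ i ∈ Finset.range (n + 1), l i * l (n - i)) +
        (1 - X) * derivative (l n))

/-- binomial moments: coefficients of `l n` shifted to `1` -/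
noncomputable def g (l : ℕ → Polynomial ℝ) (n r : ℕ) : ℝ := (Polynomial.taylor 1 (l n)).coeff r

/-- the middle part of the convolution -/
noncomputable def mid (l : ℕ → Polynomial ℝ) (n r : ℕ) : ℝ :=
  ∑ i ∈ Finset.Ioo 0 n, ((Polynomial.taylor 1 (l i)) * (Polynomial.taylor 1 (l (n-i)))).coeff r

lemma taylor_derivative (p : ℝ[X]) :
    derivative (Polynomial.taylor (1:ℝ) p) = Polynomial.taylor 1 (derivative p) := by
  simp only [taylor_apply, derivative_comp, derivative_add, derivative_X, derivative_C,
    add_zero, one_mul]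

include hl0 hl

lemma l_one : l 1 = 1 + X := by
  have h := hl 0
  rw [hl0] at h
  norm_num [Finset.sum_range_one, hl0] at h
  rw [h, map_ofNat]
  ring

lemma ldeg : ∀ n, (l n).natDegree ≤ n + 1 := by
  intro n
  induction n using Nat.strong_induction_on with
  | _ n ih =>
    match n with
    | 0 => rw [hl0]; simp [natDegree_X]
    | (n+1) =>
      rw [hl n]
      refine le_trans (natDegree_add_le _ _) ?_
      refine max_le ?_ ?_
      · refine le_trans (natDegree_add_le _ _) ?_
        refine max_le ?_ ?_
        · refine le_trans (natDegree_add_le _ _) ?_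
          refine max_le ?_ ?_
          · refine le_trans (natDegree_mul_le) ?_
            have h1 : (C (2:ℝ) - X).natDegree ≤ 1 := by
              refine le_trans (natDegree_sub_le _ _) ?_
              simp [natDegree_C, natDegree_X]
            have h2 := ih n (by omega)
            omega
          · refine le_trans (natDegree_mul_le) ?_
            have h1 : (C (2*(n:ℝ))).natDegree = 0 := natDegree_C _
            have h2 := ih n (by omega)
            omega
        · refine le_trans (natDegree_sum_le _ _) ?_
          rw [Finset.fold_max_le]
          constructor
          · omega
          · intro i hi
            simp only [Finset.mem_range] at hi
            refine le_trans (natDegree_mul_le) ?_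
            have h1 := ih i (by omega)
            have h2 := ih (n-i) (by omega)
            omega
      · refine le_trans (natDegree_mul_le) ?_
        have h1 : ((1:ℝ[X]) - X).natDegree ≤ 1 := by
          refine le_trans (natDegree_sub_le _ _) ?_
          simp [natDegree_X]
        have h2 : (derivative (l n)).natDegree ≤ n + 1 := by
          refine le_trans (natDegree_derivative_le _) ?_
          have := ih n (by omega)
          omega
        omega

/-- nonnegativity of the coefficients of `l n` -/
lemma lpos : ∀ n k, 0 ≤ (l n).coeff k := by
  intro n
  induction n using Nat.strong_induction_on with
  | _ n ih =>
    match n with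
    | 0 =>
      intro k
      rw [hl0, coeff_X]
      split <;> norm_num
    | 1 =>
      intro k
      rw [l_one hl0 hl, coeff_add, coeff_one, coeff_X]
      split <;> split <;> norm_num
    | (j+2) =>
      intro k
      set n := j + 1 with hn
      have hn1 : 1 ≤ n := by omega
      have ihn : ∀ k, 0 ≤ (l n).coeff k := ih n (by omega)
      have hmid : ∀ k', (0:ℝ) ≤ ∑ i ∈ Finset.Ioo 0 n, (l i * l (n-i)).coeff k' := by
        intro k'
        apply Finset.sum_nonneg
        intro i hi
        simp only [Finset.mem_Ioo] at hi
        rw [coeff_mul]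
        apply Finset.sum_nonneg
        intro x _
        exact mul_nonneg (ih i (by omega) _) (ih (n-i) (by omega) _)
      have hsplit : ∑ i ∈ Finset.range (n+1), l i * l (n-i)
          = X * l n + l n * X + ∑ i ∈ Finset.Ioo 0 n, l i * l (n-i) := by
        rw [range_split hn1, Finset.sum_insert (by
            simp only [Finset.mem_insert, Finset.mem_Ioo]; omega),
          Finset.sum_insert (by simp only [Finset.mem_Ioo]; omega)]
        rw [Nat.sub_zero, Nat.sub_self, hl0]
        ring
      rw [hl n, hsplit]
      simp only [coeff_add, coeff_sub, coeff_C_mul, sub_mul, one_mul, coeff_mul_X,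
        finset_sum_coeff]
      rcases Nat.eq_zero_or_pos k with rfl | hk
      · simp only [mul_coeff_zero, coeff_X_zero, zero_mul, coeff_derivative]
        norm_num
        have h2 : (0:ℝ) ≤ 2 * (n:ℝ) * (l n).coeff 0 :=
          mul_nonneg (by positivity) (ihn 0)
        have hm0' : (0:ℝ) ≤ ∑ x ∈ Finset.Ioo 0 n, (l x).coeff 0 * (l (n-x)).coeff 0 := by
          apply Finset.sum_nonneg
          intro i hi
          simp only [Finset.mem_Ioo] at hi
          exact mul_nonneg (ih i (by omega) _) (ih (n-i) (by omega) _)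
        nlinarith [ihn 0, ihn 1, hm0']
      · obtain ⟨s, rfl⟩ : ∃ s, k = s + 1 := ⟨k - 1, by omega⟩
        simp only [coeff_X_mul, coeff_mul_X, coeff_derivative]
        push_cast
        rcases le_or_gt (s+1) (2*n+2) with hs | hs
        · rw [hn] at hs
          have hA : (0:ℝ) ≤ (2*((j:ℝ)+1)+2) - ((s:ℝ)+1) := by
            have : ((s:ℝ)+1) ≤ 2*((j:ℝ)+1)+2 := by exact_mod_cast hs
            linarith
          have hnR : (n:ℝ) = (j:ℝ)+1 := by rw [hn]; push_cast; ring
          rw [hnR]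
          nlinarith [mul_nonneg hA (ihn (s+1)), ihn s,
            mul_nonneg (by positivity : (0:ℝ) ≤ (s:ℝ)+2) (ihn (s+1+1)), hmid (s+1)]
        · have hz : (l n).coeff (s+1) = 0 := by
            apply coeff_eq_zero_of_natDegree_lt
            have := ldeg hl0 hl n
            omega
          have hz2 : (l n).coeff (s+1+1) = 0 := by
            apply coeff_eq_zero_of_natDegree_lt
            have := ldeg hl0 hl n
            omega
          rw [hz, hz2]
          nlinarith [ihn s, hmid (s+1)]


lemma gsum (n r : ℕ) : g l n r = ∑ ν ∈ Finset.range (n+2), (l n).coeff ν * ((ν.choose r : ℝ)) := by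
  have hdeg : (l n).natDegree < n + 2 := by have := ldeg hl0 hl n; omega
  unfold g
  rw [taylor_apply]
  show (eval₂ C (X + C 1) (l n)).coeff r = _
  rw [Polynomial.eval₂_eq_sum_range' C hdeg (X + C 1)]
  rw [finset_sum_coeff]
  apply Finset.sum_congr rfl
  intro ν _
  rw [coeff_C_mul, show (C (1:ℝ)) = 1 from map_one C]
  rw [show (((X:ℝ[X]) + 1) ^ ν).coeff r = ((ν.choose r : ℕ) : ℝ) from coeff_X_add_one_pow ℝ ν r]

lemma gnonneg (n r : ℕ) : 0 ≤ g l n r := by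
  rw [gsum hl0 hl]
  apply Finset.sum_nonneg
  intro ν _
  exact mul_nonneg (lpos hl0 hl n ν) (by positivity)

lemma gdeg {n r : ℕ} (h : n + 2 ≤ r) : g l n r = 0 := by
  unfold g
  apply coeff_eq_zero_of_natDegree_lt
  rw [natDegree_taylor]
  have := ldeg hl0 hl n
  omega

lemma Prec (n : ℕ) : Polynomial.taylor (1:ℝ) (l (n+1)) =
    (C (2*(n:ℝ)) + C 1 - X) * Polynomial.taylor 1 (l n)
    + (∑ i ∈ Finset.range (n+1), Polynomial.taylor 1 (l i) * Polynomial.taylor 1 (l (n-i)))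
    - X * derivative (Polynomial.taylor 1 (l n)) := by
  rw [hl n]
  rw [map_add, map_add, map_add, taylor_mul, taylor_mul, taylor_mul, map_sub, map_sub,
    taylor_C, taylor_C, taylor_X, map_sum]
  rw [show Polynomial.taylor (1:ℝ) 1 = 1 by rw [← C_1, taylor_C]]
  rw [taylor_derivative]
  rw [← taylor_derivative]
  simp only [taylor_mul]
  rw [show (C (1:ℝ)) = 1 from map_one C, show (C (2:ℝ)) = 2 from map_ofNat C 2]
  have e2 : (2:ℝ[X]) = 1 + 1 := by norm_num
  rw [e2]
  ring

lemma grec {n : ℕ} (hn : 1 ≤ n) (s : ℕ) :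
    g l (n+1) (s+1) = ((2*(n:ℝ)+2) - s) * g l n (s+1) + g l n s + mid l n (s+1) := by
  have hconv : (∑ i ∈ Finset.range (n+1), Polynomial.taylor (1:ℝ) (l i) * Polynomial.taylor 1 (l (n-i)))
      = (X + C 1) * Polynomial.taylor 1 (l n) + (X + C 1) * Polynomial.taylor 1 (l n)
        + ∑ i ∈ Finset.Ioo 0 n, Polynomial.taylor 1 (l i) * Polynomial.taylor 1 (l (n-i)) := by
    rw [range_split hn, Finset.sum_insert (by
        simp only [Finset.mem_insert, Finset.mem_Ioo]; omega),
      Finset.sum_insert (by simp only [Finset.mem_Ioo]; omega)]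
    rw [Nat.sub_zero, Nat.sub_self, hl0, taylor_X]
    ring
  have hP := Prec hl0 hl n
  rw [hconv] at hP
  have := congrArg (fun p : ℝ[X] => p.coeff (s+1)) hP
  simp only [coeff_add, coeff_sub, add_mul, sub_mul, coeff_C_mul, one_mul, coeff_X_mul,
    coeff_derivative, finset_sum_coeff] at this
  unfold g mid
  rw [this]
  push_cast
  ring

end lfacts

section glbounds
variable {m : ℕ → ℕ} (hm0 : m 0 = 1)
  (hm : ∀ n : ℕ, m (n + 1) =
      (∑ k ∈ Finset.range (n + 1), m k * m (n - k)) + (2 * (n + 1) - 1) * m n)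
  {l : ℕ → Polynomial ℝ} (hl0 : l 0 = X)
  (hl : ∀ n : ℕ, l (n + 1) =
      (C 2 - X) * l n + C (2 * (n : ℝ)) * l n +
        (∑ i ∈ Finset.range (n + 1), l i * l (n - i)) +
        (1 - X) * derivative (l n))

include hm0 hm hl0 hl

lemma eval1 : ∀ n, (l n).eval 1 = (m n : ℝ) := by
  intro n
  induction n using Nat.strong_induction_on with
  | _ n ih =>
    match n with
    | 0 => rw [hl0, eval_X, hm0]; norm_num
    | (n+1) =>
      rw [hl n]
      have hmr := hm n
      have e : 2*(n+1)-1 = 2*n+1 := by omega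
      rw [e] at hmr
      have hmrr : ((m (n+1) : ℝ)) = (∑ k ∈ Finset.range (n + 1), (m k : ℝ) * (m (n - k) : ℝ))
          + (2*(n:ℝ)+1) * (m n : ℝ) := by
        rw [hmr]
        push_cast
        ring
      rw [hmrr]
      simp only [eval_add, eval_mul, eval_sub, eval_C, eval_X, eval_one, eval_finset_sum]
      rw [ih n (by omega)]
      have hsum : ∑ i ∈ Finset.range (n+1), (l i).eval 1 * (l (n-i)).eval 1
          = ∑ k ∈ Finset.range (n + 1), (m k : ℝ) * (m (n - k) : ℝ) := by
        apply Finset.sum_congr rfl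
        intro i hi
        simp only [Finset.mem_range] at hi
        rw [ih i (by omega), ih (n-i) (by omega)]
      rw [hsum]
      ring

lemma gzero : ∀ n, g l n 0 = (m n : ℝ) := by
  intro n
  unfold g
  rw [taylor_coeff_zero]
  exact eval1 hm0 hm hl0 hl n

lemma midnonneg (n r : ℕ) : 0 ≤ mid l n r := by
  unfold mid
  apply Finset.sum_nonneg
  intro i _
  rw [coeff_mul]
  apply Finset.sum_nonneg
  intro x _
  exact mul_nonneg (gnonneg hl0 hl _ _) (gnonneg hl0 hl _ _)

lemma g_zero_zero : g l 0 0 = 1 := by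
  rw [gzero hm0 hm hl0 hl, hm0]; norm_num

/-- the key a priori bound -/
lemma gbound : ∀ n r, g l n r ≤ (4:ℝ)^r * (m n : ℝ) := by
  intro n
  induction n using Nat.strong_induction_on with
  | _ n ih =>
    match n with
    | 0 =>
      intro r
      unfold g
      rw [hl0, taylor_X, hm0]
      match r with
      | 0 => rw [coeff_add, coeff_X, coeff_C]; norm_num
      | 1 => rw [coeff_add, coeff_X, coeff_C]; norm_num
      | (r+2) =>
        rw [coeff_add, coeff_X, coeff_C, if_neg (by omega), if_neg (by omega)]
        simp only [add_zero, zero_add]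
        positivity
    | 1 =>
      intro r
      unfold g
      rw [l_one hl0 hl]
      rw [map_add, taylor_X, show Polynomial.taylor (1:ℝ) 1 = 1 by rw [← C_1, taylor_C]]
      rw [LeavesAux.m_one hm0 hm]
      have hre : (1:ℝ[X]) + (X + C 1) = X + C 2 := by
        rw [show (C (1:ℝ)) = 1 from map_one C, show (C (2:ℝ)) = 2 from map_ofNat C 2]
        ring
      rw [hre]
      match r with
      | 0 => rw [coeff_add, coeff_X, coeff_C]; norm_num
      | 1 => rw [coeff_add, coeff_X, coeff_C]; norm_num
      | (r+2) =>
        rw [coeff_add, coeff_X, coeff_C, if_neg (by omega), if_neg (by omega)]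
        simp only [add_zero, zero_add]
        positivity
    | (j+2) =>
      intro r
      set n := j + 1 with hn
      have hn1 : 1 ≤ n := by omega
      match r with
      | 0 =>
        rw [gzero hm0 hm hl0 hl]
        norm_num
      | (s+1) =>
        rcases le_or_gt (n+3) (s+1) with hbig | hsmall
        · rw [gdeg hl0 hl (by omega)]
          positivity
        · -- s + 1 ≤ n + 2, so (2n+2) - s ≥ n - 1 ≥ 0
          rw [grec hl0 hl hn1 s]
          have hA : (0:ℝ) ≤ (2*(n:ℝ)+2) - s := by
            have : (s:ℝ) ≤ (n:ℝ) + 2 := by exact_mod_cast (by omega : s ≤ n + 2)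
            have : (0:ℝ) ≤ (n:ℝ) := by positivity
            linarith
          have hmid : mid l n (s+1) ≤ ((s:ℝ)+2) * 4^(s+1) * (LeavesAux.Sm m n : ℝ) := by
            unfold mid
            have hterm : ∀ i ∈ Finset.Ioo 0 n,
                ((Polynomial.taylor (1:ℝ) (l i)) * (Polynomial.taylor 1 (l (n-i)))).coeff (s+1)
                ≤ ((s:ℝ)+2) * 4^(s+1) * ((m i : ℝ) * (m (n-i) : ℝ)) := by
              intro i hi
              simp only [Finset.mem_Ioo] at hi
              rw [coeff_mul]
              have hterm2 : ∀ x ∈ Finset.HasAntidiagonal.antidiagonal (s+1),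
                  (Polynomial.taylor (1:ℝ) (l i)).coeff x.1 * (Polynomial.taylor 1 (l (n-i))).coeff x.2
                  ≤ 4^(s+1) * ((m i : ℝ) * (m (n-i) : ℝ)) := by
                intro x hx
                have hxy := Finset.HasAntidiagonal.mem_antidiagonal.mp hx
                have b1 : g l i x.1 ≤ (4:ℝ)^x.1 * (m i : ℝ) := ih i (by omega) x.1
                have b2 : g l (n-i) x.2 ≤ (4:ℝ)^x.2 * (m (n-i) : ℝ) := ih (n-i) (by omega) x.2
                have n1 : 0 ≤ g l i x.1 := gnonneg hl0 hl _ _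
                have n2 : 0 ≤ g l (n-i) x.2 := gnonneg hl0 hl _ _
                have : g l i x.1 * g l (n-i) x.2 ≤ ((4:ℝ)^x.1 * (m i : ℝ)) * ((4:ℝ)^x.2 * (m (n-i) : ℝ)) := by
                  apply mul_le_mul b1 b2 n2 (by positivity)
                calc (Polynomial.taylor (1:ℝ) (l i)).coeff x.1 * (Polynomial.taylor 1 (l (n-i))).coeff x.2
                    = g l i x.1 * g l (n-i) x.2 := rfl
                  _ ≤ ((4:ℝ)^x.1 * (m i : ℝ)) * ((4:ℝ)^x.2 * (m (n-i) : ℝ)) := this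
                  _ = (4:ℝ)^(x.1+x.2) * ((m i : ℝ) * (m (n-i) : ℝ)) := by rw [pow_add]; ring
                  _ = 4^(s+1) * ((m i : ℝ) * (m (n-i) : ℝ)) := by rw [hxy]
              calc (∑ x ∈ Finset.HasAntidiagonal.antidiagonal (s+1),
                    (Polynomial.taylor (1:ℝ) (l i)).coeff x.1 * (Polynomial.taylor 1 (l (n-i))).coeff x.2)
                  ≤ (Finset.HasAntidiagonal.antidiagonal (s+1)).card • (4^(s+1) * ((m i : ℝ) * (m (n-i) : ℝ))) :=
                    Finset.sum_le_card_nsmul _ _ _ hterm2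
                _ = ((s:ℝ)+2) * 4^(s+1) * ((m i : ℝ) * (m (n-i) : ℝ)) := by
                    rw [Finset.Nat.card_antidiagonal, nsmul_eq_mul]
                    push_cast
                    ring
            calc (∑ i ∈ Finset.Ioo 0 n, ((Polynomial.taylor (1:ℝ) (l i)) * (Polynomial.taylor 1 (l (n-i)))).coeff (s+1))
                ≤ ∑ i ∈ Finset.Ioo 0 n, ((s:ℝ)+2) * 4^(s+1) * ((m i : ℝ) * (m (n-i) : ℝ)) :=
                  Finset.sum_le_sum hterm
              _ = ((s:ℝ)+2) * 4^(s+1) * (LeavesAux.Sm m n : ℝ) := by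
                  rw [← Finset.mul_sum]
                  unfold LeavesAux.Sm
                  push_cast
                  ring
          -- numeric assembly
          have hg1 : g l n (s+1) ≤ (4:ℝ)^(s+1) * (m n : ℝ) := ih n (by omega) (s+1)
          have hg0 : g l n s ≤ (4:ℝ)^s * (m n : ℝ) := ih n (by omega) s
          have hS34 : 4 * (LeavesAux.Sm m n : ℝ) ≤ 3 * (m n : ℝ) := by
            exact_mod_cast LeavesAux.Sm_le_34 hm0 hm n
          have hmrec : (m (n+1) : ℝ) = (2*(n:ℝ)+3) * (m n : ℝ) + (LeavesAux.Sm m n : ℝ) := by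
            have := LeavesAux.m_rec hm0 hm hn1
            rw [this]
            push_cast
            ring
          rw [hmrec]
          have h4s : (0:ℝ) < 4^s := by positivity
          have hMn : (0:ℝ) ≤ (m n : ℝ) := by positivity
          have hSn : (0:ℝ) ≤ (LeavesAux.Sm m n : ℝ) := by positivity
          have hs0 : (0:ℝ) ≤ (s:ℝ) := by positivity
          -- goal: (2n+2-s) g(s+1) + g s + mid ≤ 4^{s+1} ((2n+3) M + S)
          have e1 : ((2*(n:ℝ)+2) - s) * g l n (s+1) ≤ ((2*(n:ℝ)+2) - s) * ((4:ℝ)^(s+1) * (m n : ℝ)) :=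
            mul_le_mul_of_nonneg_left hg1 hA
          have key : ((2*(n:ℝ)+2) - s) * ((4:ℝ)^(s+1) * (m n : ℝ)) + (4:ℝ)^s * (m n : ℝ)
              + ((s:ℝ)+2) * 4^(s+1) * (LeavesAux.Sm m n : ℝ)
              ≤ (4:ℝ)^(s+1) * ((2*(n:ℝ)+3) * (m n : ℝ) + (LeavesAux.Sm m n : ℝ)) := by
            have e4 : (4:ℝ)^(s+1) = 4 * 4^s := by rw [pow_succ]; ring
            rw [e4]
            have hint1 : (((s:ℝ)+1) * 4^s) * (4 * (LeavesAux.Sm m n : ℝ))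
                ≤ (((s:ℝ)+1) * 4^s) * (3 * (m n : ℝ)) :=
              mul_le_mul_of_nonneg_left hS34 (by positivity)
            have hint2 : (0:ℝ) ≤ (s:ℝ) * (4^s * (m n : ℝ)) := by positivity
            nlinarith [hint1, hint2]
          linarith [midnonneg hm0 hm hl0 hl n (s+1), hmid, e1, hg0, key]

lemma midbound (n s : ℕ) :
    mid l n (s+1) ≤ ((s:ℝ)+2) * 4^(s+1) * (LeavesAux.Sm m n : ℝ) := by
  unfold mid
  have hterm : ∀ i ∈ Finset.Ioo 0 n,
      ((Polynomial.taylor (1:ℝ) (l i)) * (Polynomial.taylor 1 (l (n-i)))).coeff (s+1)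
      ≤ ((s:ℝ)+2) * 4^(s+1) * ((m i : ℝ) * (m (n-i) : ℝ)) := by
    intro i hi
    rw [coeff_mul]
    have hterm2 : ∀ x ∈ Finset.HasAntidiagonal.antidiagonal (s+1),
        (Polynomial.taylor (1:ℝ) (l i)).coeff x.1 * (Polynomial.taylor 1 (l (n-i))).coeff x.2
        ≤ 4^(s+1) * ((m i : ℝ) * (m (n-i) : ℝ)) := by
      intro x hx
      have hxy := Finset.HasAntidiagonal.mem_antidiagonal.mp hx
      have b1 : g l i x.1 ≤ (4:ℝ)^x.1 * (m i : ℝ) := gbound hm0 hm hl0 hl i x.1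
      have b2 : g l (n-i) x.2 ≤ (4:ℝ)^x.2 * (m (n-i) : ℝ) := gbound hm0 hm hl0 hl (n-i) x.2
      have n2 : 0 ≤ g l (n-i) x.2 := gnonneg hl0 hl _ _
      have hmm : g l i x.1 * g l (n-i) x.2 ≤ ((4:ℝ)^x.1 * (m i : ℝ)) * ((4:ℝ)^x.2 * (m (n-i) : ℝ)) :=
        mul_le_mul b1 b2 n2 (by positivity)
      calc (Polynomial.taylor (1:ℝ) (l i)).coeff x.1 * (Polynomial.taylor 1 (l (n-i))).coeff x.2
          = g l i x.1 * g l (n-i) x.2 := rfl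
        _ ≤ ((4:ℝ)^x.1 * (m i : ℝ)) * ((4:ℝ)^x.2 * (m (n-i) : ℝ)) := hmm
        _ = (4:ℝ)^(x.1+x.2) * ((m i : ℝ) * (m (n-i) : ℝ)) := by rw [pow_add]; ring
        _ = 4^(s+1) * ((m i : ℝ) * (m (n-i) : ℝ)) := by rw [hxy]
    calc (∑ x ∈ Finset.HasAntidiagonal.antidiagonal (s+1),
          (Polynomial.taylor (1:ℝ) (l i)).coeff x.1 * (Polynomial.taylor 1 (l (n-i))).coeff x.2)
        ≤ (Finset.HasAntidiagonal.antidiagonal (s+1)).card • (4^(s+1) * ((m i : ℝ) * (m (n-i) : ℝ))) :=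
          Finset.sum_le_card_nsmul _ _ _ hterm2
      _ = ((s:ℝ)+2) * 4^(s+1) * ((m i : ℝ) * (m (n-i) : ℝ)) := by
          rw [Finset.Nat.card_antidiagonal, nsmul_eq_mul]
          push_cast
          ring
  calc (∑ i ∈ Finset.Ioo 0 n, ((Polynomial.taylor (1:ℝ) (l i)) * (Polynomial.taylor 1 (l (n-i)))).coeff (s+1))
      ≤ ∑ i ∈ Finset.Ioo 0 n, ((s:ℝ)+2) * 4^(s+1) * ((m i : ℝ) * (m (n-i) : ℝ)) :=
        Finset.sum_le_sum hterm
    _ = ((s:ℝ)+2) * 4^(s+1) * (LeavesAux.Sm m n : ℝ) := by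
        rw [← Finset.mul_sum]
        unfold LeavesAux.Sm
        push_cast
        ring

omit hl0 hl in
lemma sigma_nonneg (n : ℕ) : 0 ≤ (Sm m n : ℝ) / (m n : ℝ) := by positivity

omit hl0 hl in
lemma sigma_le (n : ℕ) : (Sm m n : ℝ) / (m n : ℝ) ≤ 3/4 := by
  have hM : (0:ℝ) < (m n : ℝ) := by exact_mod_cast m_pos hm0 hm n
  rw [div_le_iff₀ hM]
  have := Sm_le_34 hm0 hm n
  have hcast : 4 * (Sm m n : ℝ) ≤ 3 * (m n : ℝ) := by exact_mod_cast this
  linarith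

omit hl0 hl in
lemma sigma_tendsto : Tendsto (fun n => (Sm m n : ℝ) / (m n : ℝ)) atTop (nhds 0) := by
  apply tendsto_of_tendsto_of_tendsto_of_le_of_le' tendsto_const_nhds
    (tendsto_const_div_atTop_nhds_zero_nat 9)
  · filter_upwards with n
    exact sigma_nonneg hm0 hm n
  · filter_upwards [eventually_ge_atTop 2] with n hn
    have hM1 : (0:ℝ) < (m (n-1) : ℝ) := by exact_mod_cast m_pos hm0 hm (n-1)
    have hM : (0:ℝ) < (m n : ℝ) := by exact_mod_cast m_pos hm0 hm n
    have h9 : (Sm m n : ℝ) ≤ 9 * (m (n-1) : ℝ) := by exact_mod_cast Sm_le_9 hm0 hm hn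
    have hnM : (n:ℝ) * (m (n-1) : ℝ) ≤ (m n : ℝ) := by
      have h1 := m_lower' hm0 hm hn
      have h2 : (n:ℕ) * m (n-1) ≤ (2*n+1) * m (n-1) := Nat.mul_le_mul_right _ (by omega)
      exact_mod_cast h2.trans h1
    have hn0 : (0:ℝ) < (n:ℝ) := by
      have : (0:ℕ) < n := by omega
      exact_mod_cast this
    calc (Sm m n : ℝ) / (m n : ℝ) ≤ (9 * (m (n-1) : ℝ)) / ((n:ℝ) * (m (n-1) : ℝ)) := by
          apply div_le_div₀ (by positivity) h9 (by positivity) hnM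
      _ = 9 / (n:ℝ) := by
          rw [mul_comm (9:ℝ), mul_comm ((n:ℝ))]
          rw [mul_div_mul_left _ _ (ne_of_gt hM1)]

/-- main convergence of scaled binomial moments -/
lemma blim : ∀ r, Tendsto (fun n => g l n r / (m n : ℝ)) atTop (nhds (1/(r.factorial : ℝ))) := by
  intro r
  induction r with
  | zero =>
    have heq : ∀ n, g l n 0 / (m n : ℝ) = 1 := by
      intro n
      rw [gzero hm0 hm hl0 hl]
      have hM : (0:ℝ) < (m n : ℝ) := by exact_mod_cast m_pos hm0 hm n
      field_simp
    simp only [Nat.factorial_zero, Nat.cast_one]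
    norm_num
    exact Tendsto.congr (fun n => (heq n).symm) tendsto_const_nhds
  | succ r ih =>
    set σ : ℕ → ℝ := fun n => (Sm m n : ℝ) / (m n : ℝ) with hσ
    set L : ℝ := 1/(((r+1).factorial : ℕ) : ℝ) with hL
    have hfp : (0:ℝ) < (r.factorial : ℝ) := by exact_mod_cast r.factorial_pos
    have hLfact : L * ((r:ℝ)+1) = 1/(r.factorial : ℝ) := by
      rw [hL, Nat.factorial_succ]
      push_cast
      rw [div_mul_eq_mul_div, one_mul, mul_comm]
      rw [div_eq_div_iff (by positivity) (by positivity)]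
      ring
    have hL0 : 0 ≤ L := by rw [hL]; positivity
    apply tendsto_of_contraction _
      (fun n => ((r:ℝ)+1 + σ n)/(2*(n:ℝ)+3+ σ n))
      (fun n => (g l n r/(m n : ℝ) + mid l n (r+1)/(m n : ℝ))/(2*(n:ℝ)+3+ σ n))
      L (r+1)
    · -- recurrence
      intro n hn
      have hn1 : 1 ≤ n := by omega
      have hM : (0:ℝ) < (m n : ℝ) := by exact_mod_cast m_pos hm0 hm n
      have hM' : (0:ℝ) < (m (n+1) : ℝ) := by exact_mod_cast m_pos hm0 hm (n+1)
      have hσ0 : 0 ≤ σ n := sigma_nonneg hm0 hm n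
      have hden : (0:ℝ) < 2*(n:ℝ)+3+ σ n := by positivity
      have hMrec : (m (n+1) : ℝ) = (2*(n:ℝ)+3 + σ n) * (m n : ℝ) := by
        have h1 := m_rec hm0 hm hn1
        have h2 : (m (n+1) : ℝ) = (2*(n:ℝ)+3) * (m n : ℝ) + (Sm m n : ℝ) := by
          rw [h1]; push_cast; ring
        rw [h2, hσ]
        field_simp
      show g l (n+1) (r+1) / (m (n+1) : ℝ) = _
      rw [grec hl0 hl hn1 r, hMrec]
      push_cast
      field_simp
      ring
    · -- a ∈ [0,1]
      intro n hn
      have hσ0 : 0 ≤ σ n := sigma_nonneg hm0 hm n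
      have hden : (0:ℝ) < 2*(n:ℝ)+3+ σ n := by positivity
      constructor
      · positivity
      · rw [div_le_one hden]
        have h1 : (r:ℝ) ≤ (n:ℝ) := by exact_mod_cast (by omega : r ≤ n)
        have hn0 : (0:ℝ) ≤ (n:ℝ) := by positivity
        linarith
    · -- lower bound on a
      intro n hn
      have hσ0 : 0 ≤ σ n := sigma_nonneg hm0 hm n
      have hσ34 : σ n ≤ 3/4 := sigma_le hm0 hm n
      have hden : (0:ℝ) < 2*(n:ℝ)+3+ σ n := by positivity
      have hn0 : (0:ℝ) ≤ (n:ℝ) := by positivity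
      have hr0 : (0:ℝ) ≤ (r:ℝ) := by positivity
      apply div_le_div₀ (by positivity) (by linarith) hden
      linarith
    · -- the c ≈ L·a estimate
      intro ε hε
      have hΔt : Tendsto (fun n => |g l n r/(m n : ℝ) - 1/(r.factorial : ℝ)|) atTop (nhds 0) := by
        have := (ih.sub_const (1/(r.factorial : ℝ))).abs
        simpa using this
      have hμσ : Tendsto (fun n => ((r:ℝ)+2) * 4^(r+1) * σ n + L * σ n) atTop (nhds 0) := by
        have h1 := (sigma_tendsto hm0 hm).const_mul (((r:ℝ)+2) * 4^(r+1))
        have h2 := (sigma_tendsto hm0 hm).const_mul L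
        have := h1.add h2
        simpa using this
      have hsum : Tendsto (fun n => |g l n r/(m n : ℝ) - 1/(r.factorial : ℝ)|
          + (((r:ℝ)+2) * 4^(r+1) * σ n + L * σ n)) atTop (nhds 0) := by
        have := hΔt.add hμσ
        simpa using this
      have hev := hsum.eventually (eventually_le_nhds hε)
      filter_upwards [hev, eventually_ge_atTop 1] with n hbnd hn1
      have hM : (0:ℝ) < (m n : ℝ) := by exact_mod_cast m_pos hm0 hm n
      have hσ0 : 0 ≤ σ n := sigma_nonneg hm0 hm n
      have hden : (0:ℝ) < 2*(n:ℝ)+3+ σ n := by positivity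
      have hr0 : (0:ℝ) ≤ (r:ℝ) := by positivity
      set Δ : ℝ := g l n r/(m n : ℝ) - 1/(r.factorial : ℝ) with hΔdef
      set μ : ℝ := mid l n (r+1)/(m n : ℝ) with hμdef
      have hμ0 : 0 ≤ μ := by
        rw [hμdef]
        exact div_nonneg (midnonneg hm0 hm hl0 hl n (r+1)) hM.le
      have hμle : μ ≤ ((r:ℝ)+2) * 4^(r+1) * σ n := by
        rw [hμdef, hσ]
        rw [div_le_iff₀ hM]
        calc mid l n (r+1) ≤ ((r:ℝ)+2) * 4^(r+1) * (Sm m n : ℝ) := midbound hm0 hm hl0 hl n r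
          _ = ((r:ℝ)+2) * 4^(r+1) * ((Sm m n : ℝ) / (m n : ℝ)) * (m n : ℝ) := by
              field_simp
      have hLσ0 : 0 ≤ L * σ n := mul_nonneg hL0 hσ0
      have hkey : (g l n r/(m n : ℝ) + μ)/(2*(n:ℝ)+3+ σ n)
          - L * (((r:ℝ)+1 + σ n)/(2*(n:ℝ)+3+ σ n))
          = (Δ + μ - L * σ n)/(2*(n:ℝ)+3+ σ n) := by
        rw [hΔdef, ← mul_div_assoc, div_sub_div_same]
        congr 1
        rw [mul_add, hLfact]
        ring
      show |(g l n r/(m n : ℝ) + μ)/(2*(n:ℝ)+3+ σ n)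
          - L * (((r:ℝ)+1 + σ n)/(2*(n:ℝ)+3+ σ n))| ≤ ε * (((r:ℝ)+1 + σ n)/(2*(n:ℝ)+3+ σ n))
      rw [hkey, abs_div, abs_of_pos hden]
      have hnum : |Δ + μ - L * σ n| ≤ ε := by
        have h1 : |Δ + μ - L * σ n| ≤ |Δ| + (μ + L * σ n) := by
          have h2 : |Δ + (μ - L * σ n)| ≤ |Δ| + |μ - L * σ n| := abs_add_le _ _
          have h3 : |μ - L * σ n| ≤ μ + L * σ n := abs_le.mpr ⟨by linarith, by linarith⟩
          calc |Δ + μ - L * σ n| = |Δ + (μ - L * σ n)| := by ring_nf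
            _ ≤ |Δ| + |μ - L * σ n| := h2
            _ ≤ |Δ| + (μ + L * σ n) := by linarith
        have h4 : L * σ n ≤ L * σ n := le_refl _
        calc |Δ + μ - L * σ n| ≤ |Δ| + (μ + L * σ n) := h1
          _ ≤ |Δ| + (((r:ℝ)+2) * 4^(r+1) * σ n + L * σ n) := by linarith
          _ ≤ ε := hbnd
      calc |Δ + μ - L * σ n| / (2*(n:ℝ)+3+ σ n) ≤ ε / (2*(n:ℝ)+3+ σ n) :=
            (div_le_div_iff_of_pos_right hden).mpr hnum
        _ ≤ ε * (((r:ℝ)+1 + σ n)/(2*(n:ℝ)+3+ σ n)) := by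
            rw [← mul_div_assoc]
            apply (div_le_div_iff_of_pos_right hden).mpr
            exact le_mul_of_one_le_right hε.le (by linarith)

omit hm0 hm in
lemma gsum' (n r N : ℕ) (hN : n + 2 ≤ N) :
    g l n r = ∑ ν ∈ Finset.range N, (l n).coeff ν * ((ν.choose r : ℕ):ℝ) := by
  rw [gsum hl0 hl]
  apply Finset.sum_subset (Finset.range_subset_range.mpr hN)
  intro x hx hnx
  simp only [Finset.mem_range] at hx hnx
  have hz : (l n).coeff x = 0 := by
    apply coeff_eq_zero_of_natDegree_lt
    have := ldeg hl0 hl n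
    omega
  rw [hz, zero_mul]

omit hm0 hm in
lemma bonf (n k t : ℕ) :
    0 ≤ (-1:ℝ)^t * ((∑ j ∈ Finset.range (t+1),
      (-1:ℝ)^j * (((k+j).choose k : ℕ):ℝ) * g l n (k+j)) - (l n).coeff k) := by
  set N := n + k + 3 with hNdef
  have hkN : k ∈ Finset.range N := by simp only [Finset.mem_range]; omega
  have hgj : ∀ j, g l n (k+j) = ∑ ν ∈ Finset.range N, (l n).coeff ν * ((ν.choose (k+j) : ℕ):ℝ) :=
    fun j => gsum' hl0 hl n (k+j) N (by omega)
  set H : ℕ → ℝ := fun ν => ∑ j ∈ Finset.range (t+1),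
      (-1:ℝ)^j * (((k+j).choose k:ℕ):ℝ) * ((ν.choose (k+j):ℕ):ℝ) with hHdef
  have hswap : (∑ j ∈ Finset.range (t+1), (-1:ℝ)^j * (((k+j).choose k:ℕ):ℝ) * g l n (k+j))
      = ∑ ν ∈ Finset.range N, (l n).coeff ν * H ν := by
    rw [Finset.sum_congr rfl (fun j _ => by rw [hgj j, Finset.mul_sum])]
    rw [Finset.sum_comm]
    apply Finset.sum_congr rfl
    intro ν _
    rw [hHdef, Finset.mul_sum]
    apply Finset.sum_congr rfl
    intro j _
    ring
  have hHk : H k = 1 := by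
    simp only [hHdef]
    rw [Finset.sum_eq_single 0]
    · simp
    · intro j hj hj0
      rw [Nat.choose_eq_zero_of_lt (by omega : k < k + j)]
      simp
    · intro h
      exact absurd (Finset.mem_range.mpr (by omega)) h
  rw [hswap]
  rw [← Finset.sum_erase_add (Finset.range N) _ hkN, hHk, mul_one, add_sub_cancel_right]
  rw [Finset.mul_sum]
  apply Finset.sum_nonneg
  intro ν hν
  have hνk : ν ≠ k := (Finset.mem_erase.mp hν).1
  rcases lt_or_gt_of_ne hνk with hlt | hgt
  · have hz : H ν = 0 := by
      simp only [hHdef]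
      apply Finset.sum_eq_zero
      intro j _
      rw [Nat.choose_eq_zero_of_lt (by omega : ν < k+j)]
      simp
    rw [hz]
    simp
  · have hM1 : 1 ≤ ν - k := by omega
    have hHν : H ν = ((ν.choose k:ℕ):ℝ) * ((-1:ℝ)^t * (((ν-k-1).choose t:ℕ):ℝ)) := by
      simp only [hHdef]
      have hterm : ∀ j ∈ Finset.range (t+1),
          (-1:ℝ)^j * (((k+j).choose k:ℕ):ℝ) * ((ν.choose (k+j):ℕ):ℝ)
          = ((ν.choose k:ℕ):ℝ) * ((-1:ℝ)^j * (((ν-k).choose j:ℕ):ℝ)) := by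
        intro j _
        have hc := choose_id ν k j (by omega)
        have hcc : (((k+j).choose k:ℕ):ℝ) * ((ν.choose (k+j):ℕ):ℝ)
            = ((ν.choose k:ℕ):ℝ) * (((ν-k).choose j:ℕ):ℝ) := by exact_mod_cast hc
        calc (-1:ℝ)^j * (((k+j).choose k:ℕ):ℝ) * ((ν.choose (k+j):ℕ):ℝ)
            = (-1:ℝ)^j * ((((k+j).choose k:ℕ):ℝ) * ((ν.choose (k+j):ℕ):ℝ)) := by ring
          _ = (-1:ℝ)^j * (((ν.choose k:ℕ):ℝ) * (((ν-k).choose j:ℕ):ℝ)) := by rw [hcc]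
          _ = ((ν.choose k:ℕ):ℝ) * ((-1:ℝ)^j * (((ν-k).choose j:ℕ):ℝ)) := by ring
      rw [Finset.sum_congr rfl hterm, ← Finset.mul_sum]
      congr 1
      have := alt_sum (ν-k) t hM1
      simpa using this
    rw [hHν]
    have he : (-1:ℝ)^t * ((-1:ℝ)^t) = 1 := by
      rw [← pow_add]
      exact Even.neg_one_pow ⟨t, rfl⟩
    have hre : (-1:ℝ)^t * ((l n).coeff ν * (((ν.choose k:ℕ):ℝ)
        * ((-1:ℝ)^t * (((ν-k-1).choose t:ℕ):ℝ))))
        = ((-1:ℝ)^t * ((-1:ℝ)^t)) * ((l n).coeff ν * ((ν.choose k:ℕ):ℝ)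
          * (((ν-k-1).choose t:ℕ):ℝ)) := by ring
    rw [hre, he, one_mul]
    have := lpos hl0 hl n ν
    positivity

omit hm0 hm in
lemma bonf_even {n k t : ℕ} (ht : Even t) (hM : (0:ℝ) < (m n : ℝ)) :
    (l n).coeff k / (m n : ℝ) ≤ ∑ j ∈ Finset.range (t+1),
      (-1:ℝ)^j * (((k+j).choose k : ℕ):ℝ) * (g l n (k+j) / (m n : ℝ)) := by
  have h := bonf hl0 hl n k t
  rw [ht.neg_one_pow, one_mul, sub_nonneg] at h
  have e : ∑ j ∈ Finset.range (t+1),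
      (-1:ℝ)^j * (((k+j).choose k : ℕ):ℝ) * (g l n (k+j) / (m n : ℝ))
      = (∑ j ∈ Finset.range (t+1), (-1:ℝ)^j * (((k+j).choose k : ℕ):ℝ) * g l n (k+j)) / (m n : ℝ) := by
    rw [Finset.sum_div]
    apply Finset.sum_congr rfl
    intro j _
    ring
  rw [e]
  exact (div_le_div_iff_of_pos_right hM).mpr h

omit hm0 hm in
lemma bonf_odd {n k t : ℕ} (ht : Odd t) (hM : (0:ℝ) < (m n : ℝ)) :
    ∑ j ∈ Finset.range (t+1),
      (-1:ℝ)^j * (((k+j).choose k : ℕ):ℝ) * (g l n (k+j) / (m n : ℝ))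
      ≤ (l n).coeff k / (m n : ℝ) := by
  have h := bonf hl0 hl n k t
  rw [ht.neg_one_pow, neg_one_mul, neg_nonneg, sub_nonpos] at h
  have e : ∑ j ∈ Finset.range (t+1),
      (-1:ℝ)^j * (((k+j).choose k : ℕ):ℝ) * (g l n (k+j) / (m n : ℝ))
      = (∑ j ∈ Finset.range (t+1), (-1:ℝ)^j * (((k+j).choose k : ℕ):ℝ) * g l n (k+j)) / (m n : ℝ) := by
    rw [Finset.sum_div]
    apply Finset.sum_congr rfl
    intro j _
    ring
  rw [e]
  exact (div_le_div_iff_of_pos_right hM).mpr h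

end glbounds



end LeavesAux

open LeavesAux in
/-- The number of leaves of a uniform random rooted map with `n` edges
converges in distribution to a Poisson law of parameter `1`: for every `k ≥ 0`,
`lim_{n→∞} ℓ_{n,k}/m(n) = e^{−1}/k!`. -/
theorem leaves_poisson_law
    (m : ℕ → ℕ) (hm0 : m 0 = 1)
    (hm : ∀ n : ℕ, m (n + 1) =
      (∑ k ∈ Finset.range (n + 1), m k * m (n - k)) + (2 * (n + 1) - 1) * m n)
    (l : ℕ → Polynomial ℝ) (hl0 : l 0 = X)
    (hl : ∀ n : ℕ, l (n + 1) =
      (C 2 - X) * l n + C (2 * (n : ℝ)) * l n +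
        (∑ i ∈ Finset.range (n + 1), l i * l (n - i)) +
        (1 - X) * derivative (l n)) :
    ∀ k : ℕ,
      Tendsto (fun n : ℕ => (l n).coeff k / (m n : ℝ)) atTop
        (nhds (Real.exp (-1) / (k.factorial : ℝ))) := by
  intro k
  have hM : ∀ n, (0:ℝ) < (m n : ℝ) := fun n => by exact_mod_cast m_pos hm0 hm n
  have hkf : (0:ℝ) < (k.factorial : ℝ) := by exact_mod_cast k.factorial_pos
  set L : ℝ := Real.exp (-1) / (k.factorial : ℝ) with hLdef
  set A : ℕ → ℝ := fun t => ∑ j ∈ Finset.range (t+1),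
      (-1:ℝ)^j * (((k+j).choose k : ℕ):ℝ) * (1/(((k+j).factorial : ℕ) : ℝ)) with hAdef
  have hAterm : ∀ j : ℕ, (-1:ℝ)^j * (((k+j).choose k : ℕ):ℝ) * (1/(((k+j).factorial : ℕ) : ℝ))
      = ((-1:ℝ)^j / ((j.factorial : ℕ) : ℝ)) * (1/((k.factorial : ℕ) : ℝ)) := by
    intro j
    have hfact : ((k+j).choose k) * k.factorial * j.factorial = (k+j).factorial := by
      have h1 := Nat.choose_mul_factorial_mul_factorial (Nat.le_add_right k j)
      rwa [Nat.add_sub_cancel_left] at h1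
    have hc : (((k+j).choose k : ℕ):ℝ) * ((k.factorial : ℕ):ℝ) * ((j.factorial : ℕ):ℝ)
        = (((k+j).factorial : ℕ):ℝ) := by exact_mod_cast hfact
    have h2 : (0:ℝ) < ((j.factorial : ℕ):ℝ) := by exact_mod_cast j.factorial_pos
    have h3 : (0:ℝ) < (((k+j).factorial : ℕ):ℝ) := by exact_mod_cast (k+j).factorial_pos
    field_simp
    linear_combination hc
  have hexp : Tendsto (fun T => ∑ j ∈ Finset.range T, ((-1:ℝ)^j / ((j.factorial : ℕ):ℝ)))
      atTop (nhds (Real.exp (-1))) := by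
    have h1 := (NormedSpace.expSeries_div_hasSum_exp (-1:ℝ)).tendsto_sum_nat
    have h2 : Real.exp (-1) = NormedSpace.exp (-1:ℝ) := by rw [Real.exp_eq_exp_ℝ]
    rw [h2]
    exact h1
  have hAt : Tendsto A atTop (nhds L) := by
    have h1 : Tendsto (fun t : ℕ => (∑ j ∈ Finset.range (t+1), ((-1:ℝ)^j / ((j.factorial : ℕ):ℝ)))
        * (1/((k.factorial : ℕ):ℝ))) atTop (nhds (Real.exp (-1) * (1/((k.factorial : ℕ):ℝ)))) :=
      (hexp.comp (tendsto_add_atTop_nat 1)).mul_const _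
    have h2 : ∀ t, A t = (∑ j ∈ Finset.range (t+1), ((-1:ℝ)^j / ((j.factorial : ℕ):ℝ)))
        * (1/((k.factorial : ℕ):ℝ)) := by
      intro t
      rw [hAdef]
      simp only
      rw [Finset.sum_mul]
      exact Finset.sum_congr rfl (fun j _ => hAterm j)
    have h3 : L = Real.exp (-1) * (1/((k.factorial : ℕ):ℝ)) := by
      rw [hLdef, mul_one_div]
    rw [h3]
    exact Tendsto.congr (fun t => (h2 t).symm) h1
  have hT : ∀ t, Tendsto (fun n => ∑ j ∈ Finset.range (t+1),
      (-1:ℝ)^j * (((k+j).choose k : ℕ):ℝ) * (g l n (k+j)/(m n : ℝ))) atTop (nhds (A t)) := by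
    intro t
    rw [hAdef]
    simp only
    apply tendsto_finset_sum
    intro j _
    have h1 := (blim hm0 hm hl0 hl (k+j)).const_mul ((-1:ℝ)^j * (((k+j).choose k : ℕ):ℝ))
    have h2 : ∀ n : ℕ, ((-1:ℝ)^j * (((k+j).choose k : ℕ):ℝ)) * (g l n (k+j)/(m n : ℝ))
        = (-1:ℝ)^j * (((k+j).choose k : ℕ):ℝ) * (g l n (k+j)/(m n : ℝ)) := fun n => by ring
    have h3 : ((-1:ℝ)^j * (((k+j).choose k : ℕ):ℝ)) * (1/(((k+j).factorial : ℕ):ℝ))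
        = (-1:ℝ)^j * (((k+j).choose k : ℕ):ℝ) * (1/(((k+j).factorial : ℕ):ℝ)) := by ring
    rw [← h3]
    exact Tendsto.congr h2 (by simpa [mul_comm] using h1)
  rw [Metric.tendsto_atTop]
  intro ε hε
  obtain ⟨t₀, ht₀⟩ := (Metric.tendsto_atTop.mp hAt) (ε/4) (by linarith)
  have hte : |A (2*t₀) - L| < ε/4 := by
    have := ht₀ (2*t₀) (by omega)
    rwa [Real.dist_eq] at this
  have hto : |A (2*t₀+1) - L| < ε/4 := by
    have := ht₀ (2*t₀+1) (by omega)
    rwa [Real.dist_eq] at this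
  obtain ⟨N₁, hN₁⟩ := (Metric.tendsto_atTop.mp (hT (2*t₀))) (ε/4) (by linarith)
  obtain ⟨N₂, hN₂⟩ := (Metric.tendsto_atTop.mp (hT (2*t₀+1))) (ε/4) (by linarith)
  refine ⟨max N₁ N₂, fun n hn => ?_⟩
  have d1 : |(∑ j ∈ Finset.range (2*t₀+1),
      (-1:ℝ)^j * (((k+j).choose k : ℕ):ℝ) * (g l n (k+j)/(m n : ℝ))) - A (2*t₀)| < ε/4 := by
    have := hN₁ n (le_trans (le_max_left _ _) hn)
    rwa [Real.dist_eq] at this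
  have d2 : |(∑ j ∈ Finset.range (2*t₀+1+1),
      (-1:ℝ)^j * (((k+j).choose k : ℕ):ℝ) * (g l n (k+j)/(m n : ℝ))) - A (2*t₀+1)| < ε/4 := by
    have := hN₂ n (le_trans (le_max_right _ _) hn)
    rwa [Real.dist_eq] at this
  have hup := bonf_even hl0 hl (n := n) (k := k) (t := 2*t₀) (even_two_mul t₀) (hM n)
  have hlo := bonf_odd hl0 hl (n := n) (k := k) (t := 2*t₀+1) (odd_two_mul_add_one t₀) (hM n)
  rw [Real.dist_eq, abs_lt]
  obtain ⟨e1, e2⟩ := abs_lt.mp d1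
  obtain ⟨e3, e4⟩ := abs_lt.mp d2
  obtain ⟨e5, e6⟩ := abs_lt.mp hte
  obtain ⟨e7, e8⟩ := abs_lt.mp hto
  constructor
  · linarith
  · linarith
end

section
/- A uniform random chord diagram is asymptotically almost surely indecomposable: if I(n) denotes the number of indecomposable perfect matchings of {1, …, 2n}, then lim_{n→∞} I(n)/(2n−1)!! = 1. -/
set_option linter.unusedSectionVars false
set_option maxHeartbeats 1000000
open Filter

open Nat Finset

/-- `φ(n) = (2n−1)!! = (2n)!/(2^n·n!)`, the number of perfect matchings (chord
diagrams) of `{1, …, 2n}` (the division is exact). -/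
def phi (n : ℕ) : ℕ := (2 * n).factorial / (2 ^ n * n.factorial)


lemma phi_eq (n : ℕ) : phi n = (2 * n - 1)‼ := by
  cases n with
  | zero => rfl
  | succ m =>
    unfold phi
    have h2 : 2 * (m + 1) = (2 * m + 1) + 1 := by ring
    rw [h2, Nat.factorial_eq_mul_doubleFactorial]
    have : (2 * m + 1 + 1)‼ = (2 * (m+1))‼ := by ring_nf
    rw [this, Nat.doubleFactorial_two_mul]
    rw [Nat.mul_div_cancel_left _ (by positivity)]
    congr 1

lemma phi_zero : phi 0 = 1 := rfl

lemma phi_succ (n : ℕ) : phi (n + 1) = (2 * n + 1) * phi n := by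
  rw [phi_eq, phi_eq]
  have h : 2 * (n + 1) - 1 = (2 * n - 1) + 2 ∨ n = 0 := by omega
  rcases h with h | h
  · rw [h, Nat.doubleFactorial_add_two]; congr 1; omega
  · subst h; rfl

lemma phi_pos (n : ℕ) : 0 < phi n := by rw [phi_eq]; exact Nat.doubleFactorial_pos _

lemma phi_one : phi 1 = 1 := rfl

lemma phi_mul_le (m : ℕ) (hm : 1 ≤ m) : ∀ k, 1 ≤ k → phi k * phi m ≤ phi (k + m - 1) := by
  intro k hk
  induction k with
  | zero => omega
  | succ l ih =>
    rcases Nat.lt_or_ge l 1 with h | hl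
    · have : l = 0 := by omega
      subst this; simp [phi_one]
    · have key := ih hl
      have h1 : l + 1 + m - 1 = (l + m - 1) + 1 := by omega
      rw [h1, phi_succ, phi_succ]
      calc (2 * l + 1) * phi l * phi m = (2 * l + 1) * (phi l * phi m) := by ring
        _ ≤ (2 * l + 1) * phi (l + m - 1) := Nat.mul_le_mul_left _ key
        _ ≤ (2 * (l + m - 1) + 1) * phi (l + m - 1) :=
            Nat.mul_le_mul_right _ (by omega)

lemma phi_mul_le' (m : ℕ) (hm : 2 ≤ m) : ∀ k, 2 ≤ k → phi k * phi m ≤ 3 * phi (k + m - 2) := by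
  intro k hk
  induction k with
  | zero => omega
  | succ l ih =>
    rcases Nat.lt_or_ge l 2 with h | hl
    · have : l = 1 := by omega
      subst this
      have : phi 2 = 3 := rfl
      rw [this]
      have h1 : 1 + 1 + m - 2 = m := by omega
      rw [h1]
    · have key := ih hl
      have h1 : l + 1 + m - 2 = (l + m - 2) + 1 := by omega
      rw [h1, phi_succ, phi_succ]
      calc (2 * l + 1) * phi l * phi m = (2 * l + 1) * (phi l * phi m) := by ring
        _ ≤ (2 * l + 1) * (3 * phi (l + m - 2)) := Nat.mul_le_mul_left _ key
        _ = 3 * ((2 * l + 1) * phi (l + m - 2)) := by ring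
        _ ≤ 3 * ((2 * (l + m - 2) + 1) * phi (l + m - 2)) :=
            Nat.mul_le_mul_left _ (Nat.mul_le_mul_right _ (by omega))


variable {α : Type} [DecidableEq α]

def IsMatching (P : Finset (Finset α)) : Prop :=
  (∀ b ∈ P, b.card = 2) ∧ ∀ x : α, ∃! b, b ∈ P ∧ x ∈ b

namespace IsMatching

variable {P : Finset (Finset α)}

lemma uniq (hP : IsMatching P) {b b' : Finset α} {x : α} (hb : b ∈ P) (hb' : b' ∈ P)
    (hx : x ∈ b) (hx' : x ∈ b') : b = b' :=
  (hP.2 x).unique ⟨hb, hx⟩ ⟨hb', hx'⟩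

lemma pair (hP : IsMatching P) {b : Finset α} {x : α} (hb : b ∈ P) (hx : x ∈ b) :
    ∃ y, y ≠ x ∧ b = {x, y} := by
  have h2 := hP.1 b hb
  rw [Finset.card_eq_two] at h2
  obtain ⟨u, v, huv, rfl⟩ := h2
  rcases Finset.mem_insert.mp hx with rfl | hxv
  · exact ⟨v, huv.symm, rfl⟩
  · rw [Finset.mem_singleton] at hxv
    subst hxv
    exact ⟨u, huv, Finset.pair_comm u x⟩

end IsMatching

/-- restriction of a block system to a subtype -/
def mrestrict (P : Finset (Finset α)) (p : α → Prop) [DecidablePred p] :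
    Finset (Finset {x // p x}) :=
  (P.filter fun b => ∀ x ∈ b, p x).image (Finset.subtype p)

/-- lift of a block system on a subtype -/
def mlift {p : α → Prop} [DecidablePred p] (Q : Finset (Finset {x // p x})) :
    Finset (Finset α) :=
  Q.image (fun q => q.map (Function.Embedding.subtype p))

lemma subtype_map_subtype {p : α → Prop} [DecidablePred p] (q : Finset {x // p x}) :
    (q.map (Function.Embedding.subtype p)).subtype p = q := by
  ext z
  simp only [Finset.mem_subtype, Finset.mem_map, Function.Embedding.coe_subtype]
  constructor
  · rintro ⟨w, hw, h⟩
    rwa [Subtype.ext h] at hw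
  · intro h; exact ⟨z, h, rfl⟩

lemma mem_map_subtype {p : α → Prop} [DecidablePred p] (q : Finset {x // p x}) {x : α}
    (hx : p x) : x ∈ q.map (Function.Embedding.subtype p) ↔ (⟨x, hx⟩ : {x // p x}) ∈ q := by
  simp only [Finset.mem_map, Function.Embedding.coe_subtype]
  constructor
  · rintro ⟨z, hz, rfl⟩; exact hz
  · intro h; exact ⟨⟨x, hx⟩, h, rfl⟩

lemma mem_map_subtype_prop {p : α → Prop} [DecidablePred p] (q : Finset {x // p x}) {x : α}
    (hx : x ∈ q.map (Function.Embedding.subtype p)) : p x := by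
  simp only [Finset.mem_map, Function.Embedding.coe_subtype] at hx
  obtain ⟨z, _, rfl⟩ := hx
  exact z.2

lemma card_subtype_of_all {p : α → Prop} [DecidablePred p] {b : Finset α}
    (hb : ∀ x ∈ b, p x) : (b.subtype p).card = b.card := by
  rw [← Finset.card_map (Function.Embedding.subtype p), Finset.subtype_map,
    Finset.filter_true_of_mem hb]

lemma mlift_mrestrict {P : Finset (Finset α)} (p : α → Prop) [DecidablePred p] :
    mlift (mrestrict P p) = P.filter (fun b => ∀ x ∈ b, p x) := by
  unfold mlift mrestrict
  rw [Finset.image_image]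
  have : ∀ b ∈ P.filter (fun b => ∀ x ∈ b, p x),
      ((Finset.subtype p b).map (Function.Embedding.subtype p)) = b := by
    intro b hb
    rw [Finset.subtype_map, Finset.filter_true_of_mem (Finset.mem_filter.mp hb).2]
  calc (P.filter (fun b => ∀ x ∈ b, p x)).image _
      = (P.filter (fun b => ∀ x ∈ b, p x)).image id := Finset.image_congr this
    _ = _ := Finset.image_id

lemma mrestrict_isMatching {P : Finset (Finset α)} (hP : IsMatching P) (p : α → Prop)
    [DecidablePred p] (hsplit : ∀ b ∈ P, (∀ x ∈ b, p x) ∨ (∀ x ∈ b, ¬ p x)) :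
    IsMatching (mrestrict P p) := by
  constructor
  · intro q hq
    obtain ⟨b, hb, rfl⟩ := Finset.mem_image.mp hq
    rw [Finset.mem_filter] at hb
    rw [card_subtype_of_all hb.2]
    exact hP.1 b hb.1
  · rintro ⟨x, hx⟩
    obtain ⟨b, ⟨hbP, hxb⟩, hbu⟩ := hP.2 x
    have hall : ∀ y ∈ b, p y := by
      rcases hsplit b hbP with h | h
      · exact h
      · exact absurd hx (h x hxb)
    refine ⟨b.subtype p, ⟨?_, ?_⟩, ?_⟩
    · exact Finset.mem_image_of_mem _ (Finset.mem_filter.mpr ⟨hbP, hall⟩)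
    · rw [Finset.mem_subtype]; exact hxb
    · rintro q ⟨hq, hxq⟩
      obtain ⟨b', hb', rfl⟩ := Finset.mem_image.mp hq
      rw [Finset.mem_filter] at hb'
      rw [Finset.mem_subtype] at hxq
      rw [hbu b' ⟨hb'.1, hxq⟩]

lemma mlift_isMatching {p : α → Prop} [DecidablePred p]
    {Q : Finset (Finset {x // p x})} {R : Finset (Finset {x // ¬ p x})}
    (hQ : IsMatching Q) (hR : IsMatching R) : IsMatching (mlift Q ∪ mlift R) := by
  constructor
  · intro b hb
    rcases Finset.mem_union.mp hb with hb | hb <;>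
    · obtain ⟨q, hq, rfl⟩ := Finset.mem_image.mp hb
      rw [Finset.card_map]
      first
        | exact hQ.1 q hq
        | exact hR.1 q hq
  · intro x
    by_cases hx : p x
    · obtain ⟨q, ⟨hqQ, hxq⟩, hqu⟩ := hQ.2 ⟨x, hx⟩
      refine ⟨q.map (Function.Embedding.subtype p), ⟨?_, ?_⟩, ?_⟩
      · exact Finset.mem_union_left _ (Finset.mem_image_of_mem _ hqQ)
      · exact (mem_map_subtype q hx).mpr hxq
      · rintro b ⟨hb, hxb⟩
        rcases Finset.mem_union.mp hb with hb | hb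
        · obtain ⟨q', hq', rfl⟩ := Finset.mem_image.mp hb
          rw [hqu q' ⟨hq', (mem_map_subtype q' hx).mp hxb⟩]
        · obtain ⟨r, hr, rfl⟩ := Finset.mem_image.mp hb
          exact absurd hx (mem_map_subtype_prop r hxb)
    · obtain ⟨q, ⟨hqQ, hxq⟩, hqu⟩ := hR.2 ⟨x, hx⟩
      refine ⟨q.map (Function.Embedding.subtype _), ⟨?_, ?_⟩, ?_⟩
      · exact Finset.mem_union_right _ (Finset.mem_image_of_mem _ hqQ)
      · exact (mem_map_subtype q hx).mpr hxq
      · rintro b ⟨hb, hxb⟩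
        rcases Finset.mem_union.mp hb with hb | hb
        · obtain ⟨q', hq', rfl⟩ := Finset.mem_image.mp hb
          exact absurd (mem_map_subtype_prop q' hxb) hx
        · obtain ⟨r, hr, rfl⟩ := Finset.mem_image.mp hb
          rw [hqu r ⟨hr, (mem_map_subtype r hx).mp hxb⟩]


lemma union_split {p : α → Prop} [DecidablePred p]
    (Q : Finset (Finset {x // p x})) (R : Finset (Finset {x // ¬ p x})) :
    ∀ b ∈ mlift Q ∪ mlift R, (∀ x ∈ b, p x) ∨ (∀ x ∈ b, ¬ p x) := by
  intro b hb
  rcases Finset.mem_union.mp hb with hb | hb <;>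
    obtain ⟨q, hq, rfl⟩ := Finset.mem_image.mp hb
  · exact Or.inl (fun x hx => mem_map_subtype_prop q hx)
  · exact Or.inr (fun x hx => mem_map_subtype_prop q hx)

lemma split_reconstruct {P : Finset (Finset α)} (p : α → Prop) [DecidablePred p]
    (hsplit : ∀ b ∈ P, (∀ x ∈ b, p x) ∨ (∀ x ∈ b, ¬ p x)) :
    mlift (mrestrict P p) ∪ mlift (mrestrict P (fun x => ¬ p x)) = P := by
  rw [mlift_mrestrict, mlift_mrestrict]
  ext b
  simp only [Finset.mem_union, Finset.mem_filter]
  constructor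
  · rintro (⟨h, _⟩ | ⟨h, _⟩) <;> exact h
  · intro hb
    rcases hsplit b hb with h | h
    · exact Or.inl ⟨hb, h⟩
    · exact Or.inr ⟨hb, h⟩

lemma mrestrict_mlift_union_left {p : α → Prop} [DecidablePred p]
    {Q : Finset (Finset {x // p x})} {R : Finset (Finset {x // ¬ p x})}
    (hR : ∀ r ∈ R, r.Nonempty) :
    mrestrict (mlift Q ∪ mlift R) p = Q := by
  unfold mrestrict
  have hfil : (mlift Q ∪ mlift R).filter (fun b => ∀ x ∈ b, p x) = mlift Q := by
    rw [Finset.filter_union]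
    have h1 : (mlift Q).filter (fun b => ∀ x ∈ b, p x) = mlift Q := by
      apply Finset.filter_true_of_mem
      intro b hb
      obtain ⟨q, hq, rfl⟩ := Finset.mem_image.mp hb
      exact fun x hx => mem_map_subtype_prop q hx
    have h2 : (mlift R).filter (fun b => ∀ x ∈ b, p x) = ∅ := by
      rw [Finset.filter_eq_empty_iff]
      intro b hb
      obtain ⟨r, hr, rfl⟩ := Finset.mem_image.mp hb
      obtain ⟨z, hz⟩ := hR r hr
      intro hall
      exact mem_map_subtype_prop r (Finset.mem_map_of_mem _ hz)
        (hall _ (Finset.mem_map_of_mem _ hz))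
    rw [h1, h2, Finset.union_empty]
  rw [hfil]
  unfold mlift
  rw [Finset.image_image]
  calc Q.image _ = Q.image id := Finset.image_congr (fun q _ => subtype_map_subtype q)
    _ = Q := Finset.image_id

lemma mrestrict_mlift_union_right {p : α → Prop} [DecidablePred p]
    {Q : Finset (Finset {x // p x})} {R : Finset (Finset {x // ¬ p x})}
    (hQ : ∀ q ∈ Q, q.Nonempty) :
    mrestrict (mlift Q ∪ mlift R) (fun x => ¬ p x) = R := by
  unfold mrestrict
  have hfil : (mlift Q ∪ mlift R).filter (fun b => ∀ x ∈ b, ¬ p x) = mlift R := by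
    rw [Finset.filter_union]
    have h1 : (mlift R).filter (fun b => ∀ x ∈ b, ¬ p x) = mlift R := by
      apply Finset.filter_true_of_mem
      intro b hb
      obtain ⟨q, hq, rfl⟩ := Finset.mem_image.mp hb
      exact fun x hx => mem_map_subtype_prop q hx
    have h2 : (mlift Q).filter (fun b => ∀ x ∈ b, ¬ p x) = ∅ := by
      rw [Finset.filter_eq_empty_iff]
      intro b hb
      obtain ⟨r, hr, rfl⟩ := Finset.mem_image.mp hb
      obtain ⟨z, hz⟩ := hQ r hr
      intro hall
      exact hall _ (Finset.mem_map_of_mem _ hz)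
        (mem_map_subtype_prop r (Finset.mem_map_of_mem _ hz))
    rw [h1, h2, Finset.empty_union]
  rw [hfil]
  unfold mlift
  rw [Finset.image_image]
  calc R.image _ = R.image id := Finset.image_congr (fun q _ => subtype_map_subtype q)
    _ = R := Finset.image_id

lemma IsMatching.block_nonempty {P : Finset (Finset α)} (hP : IsMatching P) :
    ∀ b ∈ P, b.Nonempty := by
  intro b hb
  rw [← Finset.card_pos, hP.1 b hb]
  norm_num

/-- The splitting equivalence. -/
noncomputable def splitEquiv (p : α → Prop) [DecidablePred p] :
    {P : Finset (Finset α) // IsMatching P ∧ ∀ b ∈ P, (∀ x ∈ b, p x) ∨ (∀ x ∈ b, ¬ p x)} ≃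
    {Q : Finset (Finset {x // p x}) // IsMatching Q} ×
      {R : Finset (Finset {x // ¬ p x}) // IsMatching R} where
  toFun := fun ⟨P, hP, hs⟩ =>
    (⟨mrestrict P p, mrestrict_isMatching hP p hs⟩,
     ⟨mrestrict P (fun x => ¬ p x), mrestrict_isMatching hP _ (by
        intro b hb
        rcases hs b hb with h | h
        · exact Or.inr (by simpa using h)
        · exact Or.inl h)⟩)
  invFun := fun ⟨⟨Q, hQ⟩, ⟨R, hR⟩⟩ =>
    ⟨mlift Q ∪ mlift R, mlift_isMatching hQ hR, union_split Q R⟩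
  left_inv := by
    rintro ⟨P, hP, hs⟩
    exact Subtype.ext (split_reconstruct p hs)
  right_inv := by
    rintro ⟨⟨Q, hQ⟩, ⟨R, hR⟩⟩
    refine Prod.ext (Subtype.ext ?_) (Subtype.ext ?_)
    · exact mrestrict_mlift_union_left hR.block_nonempty
    · exact mrestrict_mlift_union_right hQ.block_nonempty

lemma natcard_sigma {ι : Type} [Fintype ι] (F : ι → Type) [∀ i, Finite (F i)] :
    Nat.card (Σ i, F i) = ∑ i, Nat.card (F i) := by
  letI : ∀ i, Fintype (F i) := fun i => Fintype.ofFinite _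
  rw [Nat.card_eq_fintype_card, Fintype.card_sigma]
  simp [Nat.card_eq_fintype_card]

lemma card_matchings_two {β : Type} [Fintype β] [DecidableEq β] (h : Fintype.card β = 2) :
    Nat.card {P : Finset (Finset β) // IsMatching P} = 1 := by
  rw [Nat.card_eq_one_iff_exists]
  have huniv : IsMatching ({Finset.univ} : Finset (Finset β)) := by
    constructor
    · intro b hb
      rw [Finset.mem_singleton] at hb
      rw [hb, Finset.card_univ, h]
    · intro x
      exact ⟨Finset.univ, ⟨Finset.mem_singleton_self _, Finset.mem_univ x⟩,
        by rintro b ⟨hb, -⟩; exact Finset.mem_singleton.mp hb⟩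
  refine ⟨⟨{Finset.univ}, huniv⟩, ?_⟩
  rintro ⟨P, hP⟩
  apply Subtype.ext
  have : Nonempty β := Fintype.card_pos_iff.mp (by omega)
  obtain ⟨x⟩ := this
  ext b
  simp only [Finset.mem_singleton]
  constructor
  · intro hb
    exact Finset.eq_univ_of_card b (by rw [hP.1 b hb, h])
  · rintro rfl
    obtain ⟨b, ⟨hbP, hxb⟩, -⟩ := hP.2 x
    have : b = Finset.univ := Finset.eq_univ_of_card b (by rw [hP.1 b hbP, h])
    rwa [this] at hbP

section partner
variable (a : α)

lemma pmatch_ex (Pp : {P : Finset (Finset α) // IsMatching P}) :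
    ∃ y : {x : α // x ≠ a}, ({a, ↑y} : Finset α) ∈ Pp.1 := by
  obtain ⟨b, ⟨hbP, hab⟩, -⟩ := Pp.2.2 a
  obtain ⟨y, hy, rfl⟩ := Pp.2.pair hbP hab
  exact ⟨⟨y, hy⟩, hbP⟩

noncomputable def pmatch (Pp : {P : Finset (Finset α) // IsMatching P}) : {x : α // x ≠ a} :=
  (pmatch_ex a Pp).choose

lemma pmatch_spec (Pp : {P : Finset (Finset α) // IsMatching P}) :
    ({a, ↑(pmatch a Pp)} : Finset α) ∈ Pp.1 :=
  (pmatch_ex a Pp).choose_spec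

lemma pmatch_eq_iff (Pp : {P : Finset (Finset α) // IsMatching P}) (b : {x : α // x ≠ a}) :
    pmatch a Pp = b ↔ ({a, ↑b} : Finset α) ∈ Pp.1 := by
  constructor
  · rintro rfl; exact pmatch_spec a Pp
  · intro hb
    have h1 := pmatch_spec a Pp
    have h2 : ({a, ↑b} : Finset α) = {a, ↑(pmatch a Pp)} :=
      Pp.2.uniq hb h1 (Finset.mem_insert_self _ _) (Finset.mem_insert_self _ _)
    have h3 : (↑b : α) ∈ ({a, ↑(pmatch a Pp)} : Finset α) := by
      rw [← h2]; exact Finset.mem_insert_of_mem (Finset.mem_singleton_self _)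
    rcases Finset.mem_insert.mp h3 with h | h
    · exact absurd h b.2
    · exact (Subtype.ext (Finset.mem_singleton.mp h)).symm

/-- containing block {a,b} iff split along `∉ {a,b}` -/
lemma block_mem_iff_split {P : Finset (Finset α)} (hP : IsMatching P) (b : {x : α // x ≠ a}) :
    ({a, ↑b} : Finset α) ∈ P ↔
    ∀ c ∈ P, (∀ x ∈ c, x ∉ ({a, ↑b} : Finset α)) ∨ (∀ x ∈ c, ¬ x ∉ ({a, ↑b} : Finset α)) := by
  constructor
  · intro hmem c hc
    by_cases hceq : c = ({a, ↑b} : Finset α)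
    · exact Or.inr (by intro x hx; subst hceq; simp only [not_not]; exact hx)
    · refine Or.inl (fun x hx hxs => hceq (hP.uniq hc hmem hx hxs))
  · intro hsplit
    obtain ⟨c, ⟨hcP, hac⟩, -⟩ := hP.2 a
    have hsub : c ⊆ ({a, ↑b} : Finset α) := by
      rcases hsplit c hcP with h | h
      · exact absurd (Finset.mem_insert_self a _) (h a hac)
      · intro x hx
        have := h x hx
        rwa [not_not] at this
    have hcard : ({a, ↑b} : Finset α).card ≤ c.card := by
      rw [hP.1 c hcP, Finset.card_insert_of_notMem (by
        simp only [Finset.mem_singleton]; exact fun h => b.2 h.symm), Finset.card_singleton]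
    rwa [Finset.eq_of_subset_of_card_le hsub hcard] at hcP

end partner

lemma card_matchings : ∀ (n : ℕ) (α : Type) [Fintype α] [DecidableEq α],
    Fintype.card α = 2 * n → Nat.card {P : Finset (Finset α) // IsMatching P} = phi n := by
  intro n
  induction n with
  | zero =>
    intro α _ _ hcard
    rw [phi_zero, Nat.card_eq_one_iff_exists]
    haveI : IsEmpty α := Fintype.card_eq_zero_iff.mp (by omega)
    have hempty : IsMatching (∅ : Finset (Finset α)) :=
      ⟨fun b hb => absurd hb (Finset.notMem_empty b), fun x => isEmptyElim x⟩
    refine ⟨⟨∅, hempty⟩, ?_⟩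
    rintro ⟨P, hP⟩
    apply Subtype.ext
    simp only
    rw [Finset.eq_empty_iff_forall_notMem]
    intro b hb
    have h2 := hP.1 b hb
    obtain ⟨x, -⟩ := Finset.card_pos.mp (by omega : 0 < b.card)
    exact isEmptyElim x
  | succ m ih =>
    intro α _ _ hcard
    haveI hne : Nonempty α := Fintype.card_pos_iff.mp (by omega)
    obtain ⟨a⟩ := hne
    have keyfiber : ∀ b : {x : α // x ≠ a},
        Nat.card {Pp : {P : Finset (Finset α) // IsMatching P} // pmatch a Pp = b}
          = phi m := by
      intro b
      have hab : a ≠ (↑b : α) := Ne.symm b.2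
      have hs2 : ({a, ↑b} : Finset α).card = 2 := Finset.card_pair hab
      have e1 : {Pp : {P : Finset (Finset α) // IsMatching P} // pmatch a Pp = b}
          ≃ {P : Finset (Finset α) // IsMatching P ∧ ({a, ↑b} : Finset α) ∈ P} :=
        (Equiv.subtypeEquivRight (fun Pp => pmatch_eq_iff a Pp b)).trans
          (Equiv.subtypeSubtypeEquivSubtypeInter IsMatching (fun P => ({a, ↑b} : Finset α) ∈ P))
      have e2 : {P : Finset (Finset α) // IsMatching P ∧ ({a, ↑b} : Finset α) ∈ P}
          ≃ {P : Finset (Finset α) // IsMatching P ∧ ∀ c ∈ P,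
              (∀ x ∈ c, x ∉ ({a, ↑b} : Finset α)) ∨ (∀ x ∈ c, ¬ x ∉ ({a, ↑b} : Finset α))} :=
        Equiv.subtypeEquivRight (fun P =>
          and_congr_right (fun hP => block_mem_iff_split a hP b))
      have e3 := splitEquiv (fun x : α => x ∉ ({a, ↑b} : Finset α))
      have c1 : Fintype.card {x : α // x ∉ ({a, ↑b} : Finset α)} = 2 * m := by
        rw [Fintype.card_subtype_compl, Fintype.card_coe, hs2, hcard]
        omega
      have c2 : Fintype.card {x : α // ¬ x ∉ ({a, ↑b} : Finset α)} = 2 := by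
        rw [Fintype.card_subtype_compl, c1, hcard]
        omega
      rw [Nat.card_congr (e1.trans ((e2.trans e3)))]
      rw [Nat.card_prod, ih _ c1, card_matchings_two c2, mul_one]
    rw [Nat.card_congr (Equiv.sigmaFiberEquiv (pmatch a)).symm, natcard_sigma]
    simp only [keyfiber]
    rw [Finset.sum_const, Finset.card_univ, smul_eq_mul]
    have cne : Fintype.card {x : α // x ≠ a} = 2 * m + 1 := by
      have h1 : Fintype.card {x : α // ¬ x = a}
          = Fintype.card α - Fintype.card {x : α // x = a} := Fintype.card_subtype_compl _
      rw [Fintype.card_subtype_eq, hcard] at h1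
      have h2 : Fintype.card {x : α // x ≠ a} = Fintype.card {x : α // ¬ x = a} := rfl
      omega
    rw [cne, phi_succ]

lemma IsMatching.two_mul_card {β : Type} [Fintype β] [DecidableEq β]
    {P : Finset (Finset β)} (hP : IsMatching P) : Fintype.card β = 2 * P.card := by
  have huniv : (Finset.univ : Finset β) = P.biUnion id := by
    ext x
    simp only [Finset.mem_univ, Finset.mem_biUnion, id, true_iff]
    obtain ⟨b, ⟨hb, hxb⟩, -⟩ := hP.2 x
    exact ⟨b, hb, hxb⟩
  have hdisj : ∀ b ∈ P, ∀ c ∈ P, b ≠ c → Disjoint (id b) (id c) := by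
    intro b hb c hc hbc
    rw [Finset.disjoint_left]
    intro x hxb hxc
    exact hbc (hP.uniq hb hc hxb hxc)
  rw [← Finset.card_univ, huniv, Finset.card_biUnion hdisj]
  simp only [id]
  rw [Finset.sum_congr rfl (fun b hb => hP.1 b hb), Finset.sum_const, smul_eq_mul, mul_comm]

lemma card_fin_lt (m j : ℕ) (h : j ≤ m) :
    Fintype.card {x : Fin m // (x : ℕ) < j} = j := by
  have e : {x : Fin m // (x : ℕ) < j} ≃ Fin j :=
    { toFun := fun x => ⟨(x : Fin m), x.2⟩
      invFun := fun y => ⟨⟨(y : ℕ), lt_of_lt_of_le y.2 h⟩, y.2⟩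
      left_inv := fun x => by ext; rfl
      right_inv := fun y => by ext; rfl }
  rw [Fintype.card_congr e, Fintype.card_fin]

lemma card_fin_not_lt (m j : ℕ) (h : j ≤ m) :
    Fintype.card {x : Fin m // ¬ (x : ℕ) < j} = m - j := by
  rw [Fintype.card_subtype_compl, card_fin_lt m j h, Fintype.card_fin]

def DProp (n : ℕ) (P : Finset (Finset (Fin (2 * n)))) : Prop :=
  ∃ j : ℕ, 0 < j ∧ j < 2 * n ∧
    ∀ b ∈ P, (∀ x ∈ b, (x : ℕ) < j) ∨ (∀ x ∈ b, j ≤ (x : ℕ))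

abbrev DecT (n : ℕ) := {P : Finset (Finset (Fin (2 * n))) // IsMatching P ∧ DProp n P}

noncomputable def cutj {n : ℕ} (s : DecT n) : ℕ :=
  @Nat.find _ (Classical.decPred _) s.2.2

lemma cutj_spec {n : ℕ} (s : DecT n) : 0 < cutj s ∧ cutj s < 2 * n ∧
    ∀ b ∈ s.1, (∀ x ∈ b, (x : ℕ) < cutj s) ∨ (∀ x ∈ b, cutj s ≤ (x : ℕ)) :=
  @Nat.find_spec _ (Classical.decPred _) s.2.2

lemma cutj_split {n : ℕ} (s : DecT n) :
    ∀ b ∈ s.1, (∀ x ∈ b, (x : ℕ) < cutj s) ∨ (∀ x ∈ b, ¬ (x : ℕ) < cutj s) := by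
  intro b hb
  rcases (cutj_spec s).2.2 b hb with h | h
  · exact Or.inl h
  · exact Or.inr (fun x hx => not_lt.mpr (h x hx))

lemma cutj_even {n : ℕ} (s : DecT n) : ∃ t, cutj s = 2 * t ∧ 1 ≤ t ∧ t ≤ n - 1 := by
  obtain ⟨h0, h2n, -⟩ := cutj_spec s
  have hM : IsMatching (mrestrict s.1 (fun x => (x : ℕ) < cutj s)) :=
    mrestrict_isMatching s.2.1 _ (cutj_split s)
  have hcard := hM.two_mul_card
  rw [card_fin_lt (2 * n) (cutj s) (le_of_lt h2n)] at hcard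
  exact ⟨_, hcard, by omega, by omega⟩

noncomputable def cutk {n : ℕ} (s : DecT n) : Fin (n - 1) :=
  ⟨cutj s / 2 - 1, by obtain ⟨t, ht, h1, h2⟩ := cutj_even s; omega⟩

lemma cutj_eq_of_cutk {n : ℕ} {s : DecT n} {k : Fin (n - 1)} (h : cutk s = k) :
    cutj s = 2 * ((k : ℕ) + 1) := by
  obtain ⟨t, ht, h1, h2⟩ := cutj_even s
  have := congrArg Fin.val h
  simp only [cutk] at this
  omega

lemma fiber_split {n : ℕ} {k : Fin (n - 1)} (s : {s : DecT n // cutk s = k}) :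
    ∀ b ∈ s.1.1, (∀ x ∈ b, (x : ℕ) < 2 * ((k : ℕ) + 1)) ∨
      (∀ x ∈ b, ¬ (x : ℕ) < 2 * ((k : ℕ) + 1)) := by
  have := cutj_split s.1
  rwa [cutj_eq_of_cutk s.2] at this

def decRestrict {n : ℕ} (k : Fin (n - 1)) (s : {s : DecT n // cutk s = k}) :
    {Q : Finset (Finset {x : Fin (2 * n) // (x : ℕ) < 2 * ((k : ℕ) + 1)}) // IsMatching Q} ×
    {R : Finset (Finset {x : Fin (2 * n) // ¬ (x : ℕ) < 2 * ((k : ℕ) + 1)}) // IsMatching R} :=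
  (⟨mrestrict s.1.1 _, mrestrict_isMatching s.1.2.1 _ (fiber_split s)⟩,
   ⟨mrestrict s.1.1 _, mrestrict_isMatching s.1.2.1 (fun x => ¬ (x : ℕ) < 2 * ((k : ℕ) + 1)) (by
      intro b hb
      rcases fiber_split s b hb with h | h
      · exact Or.inr (by simpa using h)
      · exact Or.inl h)⟩)

lemma card_fiber_le {n : ℕ} (k : Fin (n - 1)) :
    Nat.card {s : DecT n // cutk s = k} ≤ phi ((k : ℕ) + 1) * phi (n - 1 - (k : ℕ)) := by
  have hk2n : 2 * ((k : ℕ) + 1) ≤ 2 * n := by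
    have := k.2
    omega
  have hinj : Function.Injective (decRestrict k) := by
    rintro s1 s2 hF
    simp only [decRestrict, Prod.mk.injEq, Subtype.mk.injEq] at hF
    obtain ⟨h1, h2⟩ := hF
    have e1 := split_reconstruct (fun x : Fin (2 * n) => (x : ℕ) < 2 * ((k : ℕ) + 1))
      (fiber_split s1)
    have e2 := split_reconstruct (fun x : Fin (2 * n) => (x : ℕ) < 2 * ((k : ℕ) + 1))
      (fiber_split s2)
    apply Subtype.ext
    apply Subtype.ext
    rw [← e1, ← e2, h1, h2]
  calc Nat.card {s : DecT n // cutk s = k} ≤ _ :=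
        Nat.card_le_card_of_injective (decRestrict k) hinj
    _ = phi ((k : ℕ) + 1) * phi (n - 1 - (k : ℕ)) := by
        rw [Nat.card_prod]
        rw [card_matchings ((k : ℕ) + 1) _ (card_fin_lt (2 * n) _ hk2n)]
        rw [card_matchings (n - 1 - (k : ℕ)) _ (by
          rw [card_fin_not_lt (2 * n) _ hk2n]
          have := k.2
          omega)]

lemma card_dec_le (n : ℕ) :
    Nat.card (DecT n) ≤ ∑ k : Fin (n - 1), phi ((k : ℕ) + 1) * phi (n - 1 - (k : ℕ)) := by
  rw [Nat.card_congr (Equiv.sigmaFiberEquiv (cutk (n := n))).symm, natcard_sigma]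
  exact Finset.sum_le_sum (fun k _ => card_fiber_le k)

lemma Esum_le (n : ℕ) (hn : 2 ≤ n) :
    ∑ k : Fin (n - 1), phi ((k : ℕ) + 1) * phi (n - 1 - (k : ℕ)) ≤
      2 * phi (n - 1) + (n - 1) * (3 * phi (n - 2)) := by
  rw [Fin.sum_univ_eq_sum_range (fun k => phi (k + 1) * phi (n - 1 - k)) (n - 1)]
  rw [← Finset.sum_filter_add_sum_filter_not (Finset.range (n - 1))
    (fun k => k = 0 ∨ k = n - 2)]
  have b1 : ∑ k ∈ (Finset.range (n - 1)).filter (fun k => k = 0 ∨ k = n - 2),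
      phi (k + 1) * phi (n - 1 - k) ≤ 2 * phi (n - 1) := by
    have hsub : (Finset.range (n - 1)).filter (fun k => k = 0 ∨ k = n - 2) ⊆
        ({0, n - 2} : Finset ℕ) := by
      intro k hk
      rcases (Finset.mem_filter.mp hk).2 with h | h <;> simp [h]
    calc ∑ k ∈ (Finset.range (n - 1)).filter (fun k => k = 0 ∨ k = n - 2),
          phi (k + 1) * phi (n - 1 - k)
        ≤ ((Finset.range (n - 1)).filter (fun k => k = 0 ∨ k = n - 2)).card • phi (n - 1) := by
          apply Finset.sum_le_card_nsmul
          intro k hk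
          have hk' := Finset.mem_range.mp (Finset.mem_filter.mp hk).1
          have h := phi_mul_le (n - 1 - k) (by omega) (k + 1) (by omega)
          have heq : k + 1 + (n - 1 - k) - 1 = n - 1 := by omega
          rwa [heq] at h
      _ ≤ 2 * phi (n - 1) := by
          rw [smul_eq_mul]
          apply Nat.mul_le_mul_right
          calc _ ≤ ({0, n - 2} : Finset ℕ).card := Finset.card_le_card hsub
            _ ≤ 2 := by
              apply le_trans (Finset.card_insert_le _ _)
              simp
  have b2 : ∑ k ∈ (Finset.range (n - 1)).filter (fun k => ¬ (k = 0 ∨ k = n - 2)),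
      phi (k + 1) * phi (n - 1 - k) ≤ (n - 1) * (3 * phi (n - 2)) := by
    calc ∑ k ∈ (Finset.range (n - 1)).filter (fun k => ¬ (k = 0 ∨ k = n - 2)),
          phi (k + 1) * phi (n - 1 - k)
        ≤ ((Finset.range (n - 1)).filter (fun k => ¬ (k = 0 ∨ k = n - 2))).card •
            (3 * phi (n - 2)) := by
          apply Finset.sum_le_card_nsmul
          intro k hk
          have hk1 := Finset.mem_range.mp (Finset.mem_filter.mp hk).1
          have hk2 := (Finset.mem_filter.mp hk).2
          push_neg at hk2
          have h := phi_mul_le' (n - 1 - k) (by omega) (k + 1) (by omega)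
          have heq : k + 1 + (n - 1 - k) - 2 = n - 2 := by omega
          rwa [heq] at h
      _ ≤ (n - 1) * (3 * phi (n - 2)) := by
          rw [smul_eq_mul]
          apply Nat.mul_le_mul_right
          apply le_trans (Finset.card_filter_le _ _)
          simp
  omega

/-- The number of indecomposable chord diagrams with `n` chords: perfect matchings of
the linearly ordered set `Fin (2n)` (partitions into two-element blocks) such that for
no cut point `j` with `1 ≤ j < 2n` every block lies entirely within the first `j`
elements or entirely within the last `2n − j` elements. -/
noncomputable def numIndecomposable (n : ℕ) : ℕ :=
  Nat.card {P : Finset (Finset (Fin (2 * n))) //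
    (∀ b ∈ P, b.card = 2) ∧
    (∀ x : Fin (2 * n), ∃! b : Finset (Fin (2 * n)), b ∈ P ∧ x ∈ b) ∧
    ¬ ∃ j : ℕ, 0 < j ∧ j < 2 * n ∧
        ∀ b ∈ P, (∀ x ∈ b, (x : ℕ) < j) ∨ (∀ x ∈ b, j ≤ (x : ℕ))}

lemma split_total (n : ℕ) : numIndecomposable n + Nat.card (DecT n) = phi n := by
  classical
  have e1 : {P : Finset (Finset (Fin (2 * n))) //
      (∀ b ∈ P, b.card = 2) ∧
      (∀ x : Fin (2 * n), ∃! b : Finset (Fin (2 * n)), b ∈ P ∧ x ∈ b) ∧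
      ¬ ∃ j : ℕ, 0 < j ∧ j < 2 * n ∧
          ∀ b ∈ P, (∀ x ∈ b, (x : ℕ) < j) ∨ (∀ x ∈ b, j ≤ (x : ℕ))} ≃
      {Pp : {P : Finset (Finset (Fin (2 * n))) // IsMatching P} // ¬ DProp n Pp.1} :=
    (Equiv.subtypeEquivRight (fun P => by
      unfold IsMatching DProp
      tauto)).trans
      (Equiv.subtypeSubtypeEquivSubtypeInter IsMatching (fun P => ¬ DProp n P)).symm
  have e2 : DecT n ≃ {Pp : {P : Finset (Finset (Fin (2 * n))) // IsMatching P} // DProp n Pp.1} :=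
    (Equiv.subtypeSubtypeEquivSubtypeInter IsMatching (DProp n)).symm
  have etot := Equiv.sumCompl (fun Pp : {P : Finset (Finset (Fin (2 * n))) // IsMatching P} =>
    DProp n Pp.1)
  have htot : Nat.card {P : Finset (Finset (Fin (2 * n))) // IsMatching P} = phi n :=
    card_matchings n (Fin (2 * n)) (Fintype.card_fin _)
  rw [numIndecomposable, Nat.card_congr e1, Nat.card_congr e2, ← htot,
    ← Nat.card_congr etot, Nat.card_sum]
  omega

lemma dec_mul_le (n : ℕ) (hn : 3 ≤ n) : Nat.card (DecT n) * n ≤ 7 * phi n := by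
  obtain ⟨m, rfl⟩ : ∃ m, n = m + 3 := ⟨n - 3, by omega⟩
  have hD := le_trans (card_dec_le (m + 3)) (Esum_le (m + 3) (by omega))
  have h1 : phi (m + 3) = (2 * (m + 2) + 1) * phi (m + 2) := phi_succ (m + 2)
  have h2 : phi (m + 2) = (2 * (m + 1) + 1) * phi (m + 1) := phi_succ (m + 1)
  have hs1 : m + 3 - 1 = m + 2 := by omega
  have hs2 : m + 3 - 2 = m + 1 := by omega
  rw [hs1, hs2] at hD
  calc Nat.card (DecT (m + 3)) * (m + 3)
      ≤ (2 * phi (m + 2) + (m + 2) * (3 * phi (m + 1))) * (m + 3) :=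
        Nat.mul_le_mul_right _ hD
    _ ≤ 7 * phi (m + 3) := by
        rw [h1, h2]
        nlinarith [phi_pos (m + 1), sq_nonneg m]

/-- A uniform random chord diagram is asymptotically almost surely
indecomposable: `lim_{n→∞} I(n)/(2n−1)!! = 1`. -/
theorem indecomposable_aas :
    Tendsto (fun n : ℕ => (numIndecomposable n : ℝ) / (phi n : ℝ)) atTop (nhds 1) := by
  have hphi : ∀ n, (0 : ℝ) < (phi n : ℝ) := fun n => by exact_mod_cast phi_pos n
  apply tendsto_of_tendsto_of_tendsto_of_le_of_le' (g := fun n : ℕ => 1 - 7 / (n : ℝ))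
    (h := fun _ : ℕ => (1 : ℝ))
  · have h0 := tendsto_const_div_atTop_nhds_zero_nat (7 : ℝ)
    have := tendsto_const_nhds (x := (1 : ℝ)) (f := atTop (α := ℕ)) |>.sub h0
    simpa using this
  · exact tendsto_const_nhds
  · filter_upwards [eventually_ge_atTop 3] with n hn
    have hnR : (0 : ℝ) < (n : ℝ) := by
      have : 0 < n := by omega
      exact_mod_cast this
    have hD : Nat.card (DecT n) * n ≤ 7 * phi n := dec_mul_le n hn
    have hsplit := split_total n
    have hnum : (numIndecomposable n : ℝ) = (phi n : ℝ) - (Nat.card (DecT n) : ℝ) := by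
      have h' : numIndecomposable n = phi n - Nat.card (DecT n) := by omega
      rw [h', Nat.cast_sub (by omega)]
    rw [hnum, sub_div, div_self (ne_of_gt (hphi n))]
    apply sub_le_sub_left
    rw [div_le_div_iff₀ (hphi n) hnR]
    calc (Nat.card (DecT n) : ℝ) * n = ((Nat.card (DecT n) * n : ℕ) : ℝ) := by push_cast; ring
      _ ≤ ((7 * phi n : ℕ) : ℝ) := by exact_mod_cast hD
      _ = 7 * (phi n : ℝ) := by push_cast; ring
  · filter_upwards with n
    rw [div_le_one (hphi n)]
    have := split_total n
    exact_mod_cast Nat.le.intro this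
end
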